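/- arXiv:2211.11247 — 5 statements merged into one kernel-verified Lean document; each statement's English description precedes it below -/
import Mathlib

section
/- The group of positive definite solutions to the HCREs is unique: if {P_i^{(1)}}_{i=1}^N and {P_i^{(2)}}_{i=1}^N are both groups of positive definite n×n matrices satisfying P_i = A (∑_{j=1}^N l_{ij} P_j^{-1} + l_{ij} C_jᵀ R_j^{-1} C_j)^{-1} Aᵀ + Q for all i, then P_i^{(1)} = P_i^{(2)} for every i ∈ {1, …, N}. -/
open Matrix Filter

namespace HCRE

variable {n : ℕ}

abbrev Mat (n : ℕ) := Matrix (Fin n) (Fin n) ℝ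

lemma psd_def {M : Mat n} (h1 : M.IsHermitian) (h2 : ∀ x : Fin n → ℝ, 0 ≤ x ⬝ᵥ M *ᵥ x) :
    M.PosSemidef := Matrix.PosSemidef.of_dotProduct_mulVec_nonneg h1 fun x => by simpa using h2 x

lemma psd_quad {M : Mat n} (h : M.PosSemidef) (x : Fin n → ℝ) : 0 ≤ x ⬝ᵥ M *ᵥ x := by
  simpa using h.dotProduct_mulVec_nonneg x

lemma pd_quad {M : Mat n} (h : M.PosDef) {x : Fin n → ℝ} (hx : x ≠ 0) : 0 < x ⬝ᵥ M *ᵥ x := by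
  simpa using h.dotProduct_mulVec_pos hx

lemma herm_smul {c : ℝ} {M : Mat n} (h : M.IsHermitian) : (c • M).IsHermitian := by
  unfold Matrix.IsHermitian at *
  rw [conjTranspose_smul, h]
  simp

lemma psd_smul {c : ℝ} (hc : 0 ≤ c) {M : Mat n} (h : M.PosSemidef) : (c • M).PosSemidef := by
  refine psd_def (herm_smul h.1) fun x => ?_
  rw [smul_mulVec, dotProduct_smul]
  exact mul_nonneg hc (psd_quad h x)

lemma pd_smul {c : ℝ} (hc : 0 < c) {M : Mat n} (h : M.PosDef) : (c • M).PosDef := by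
  refine Matrix.PosDef.of_dotProduct_mulVec_pos (herm_smul h.1) fun x hx => ?_
  simp only [smul_mulVec, dotProduct_smul, smul_eq_mul]
  simpa using mul_pos hc (pd_quad h hx)

lemma psd_sum {ι : Type*} (s : Finset ι) (f : ι → Mat n) (h : ∀ j ∈ s, (f j).PosSemidef) :
    (∑ j ∈ s, f j).PosSemidef := by
  classical
  induction s using Finset.induction_on with
  | empty => simpa using Matrix.PosSemidef.zero
  | insert _ _ hj ih =>
    rw [Finset.sum_insert hj]
    exact ((h _ (by simp)).add (ih fun j hjs => h j (by simp [hjs])))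


variable {n : ℕ}

lemma conj_psd {X : Mat n} (hX : X.PosSemidef) (B : Mat n) : (B * X * Bᵀ).PosSemidef := by
  simpa [conjTranspose_eq_transpose_of_trivial] using hX.mul_mul_conjTranspose_same B

lemma conj_psd' {m : ℕ} {X : Matrix (Fin m) (Fin m) ℝ} (hX : X.PosSemidef)
    (B : Matrix (Fin m) (Fin n) ℝ) : (Bᵀ * X * B).PosSemidef := by
  simpa [conjTranspose_eq_transpose_of_trivial] using hX.conjTranspose_mul_mul_same B

lemma smul_inv'' {c : ℝ} (hc : c ≠ 0) {M : Mat n} (hM : IsUnit M.det) :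
    (c • M)⁻¹ = c⁻¹ • M⁻¹ := by
  apply Matrix.inv_eq_right_inv
  rw [Matrix.smul_mul, Matrix.mul_smul, smul_smul, mul_inv_cancel₀ hc,
    Matrix.mul_nonsing_inv _ hM, one_smul]

lemma inv_antitone {X Y : Mat n} (hX : X.PosDef) (h : (Y - X).PosSemidef) :
    (X⁻¹ - Y⁻¹).PosSemidef := by
  have hY : Y.PosDef := by
    have := hX.add_posSemidef h
    simpa using this
  have hXu : IsUnit X.det := (Matrix.isUnit_iff_isUnit_det X).mp hX.isUnit
  have hYu : IsUnit Y.det := (Matrix.isUnit_iff_isUnit_det Y).mp hY.isUnit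
  have hXi : X⁻¹.PosDef := Matrix.posDef_inv_iff.mpr hX
  have hYiH : Y⁻¹.IsHermitian := hY.isHermitian.inv
  -- identity
  have key : X⁻¹ - Y⁻¹ = Y⁻¹ * (Y - X) * Y⁻¹ + (Y⁻¹ * (Y - X)) * X⁻¹ * ((Y - X) * Y⁻¹) := by
    have h1 : Y⁻¹ * Y = 1 := Matrix.nonsing_inv_mul _ hYu
    have h2 : Y * Y⁻¹ = 1 := Matrix.mul_nonsing_inv _ hYu
    have h3 : X⁻¹ * X = 1 := Matrix.nonsing_inv_mul _ hXu
    have h4 : X * X⁻¹ = 1 := Matrix.mul_nonsing_inv _ hXu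
    have e1 : Y⁻¹ * (Y - X) = 1 - Y⁻¹ * X := by rw [Matrix.mul_sub, h1]
    have e2 : (Y - X) * Y⁻¹ = 1 - X * Y⁻¹ := by rw [Matrix.sub_mul, h2]
    rw [e1, e2]
    have c1 : ∀ w : Mat n, X⁻¹ * (X * w) = w := fun w => Matrix.nonsing_inv_mul_cancel_left _ _ hXu
    have c2 : ∀ w : Mat n, Y⁻¹ * (Y * w) = w := fun w => Matrix.nonsing_inv_mul_cancel_left _ _ hYu
    simp only [Matrix.sub_mul, Matrix.mul_sub, Matrix.one_mul, Matrix.mul_one, Matrix.mul_assoc,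
      c1, c2, h1, h2, h3, h4]
    abel
  rw [key]
  have t1 : (Y⁻¹ * (Y - X) * Y⁻¹).PosSemidef := by
    have := conj_psd h Y⁻¹
    rwa [show Y⁻¹ᵀ = Y⁻¹ from by
      have := hYiH
      rwa [Matrix.IsHermitian, conjTranspose_eq_transpose_of_trivial] at this] at this
  have t2 : ((Y⁻¹ * (Y - X)) * X⁻¹ * ((Y - X) * Y⁻¹)).PosSemidef := by
    have := conj_psd' hXi.posSemidef ((Y - X) * Y⁻¹)
    rwa [show ((Y - X) * Y⁻¹)ᵀ = Y⁻¹ * (Y - X) from by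
      rw [Matrix.transpose_mul,
        show Y⁻¹ᵀ = Y⁻¹ from by
          have := hYiH; rwa [Matrix.IsHermitian, conjTranspose_eq_transpose_of_trivial] at this,
        show (Y - X)ᵀ = Y - X from by
          have := h.isHermitian; rwa [Matrix.IsHermitian, conjTranspose_eq_transpose_of_trivial] at this]] at this
  exact t1.add t2

lemma psd_antisymm {X Y : Mat n} (h1 : (Y - X).PosSemidef) (h2 : (X - Y).PosSemidef) :
    X = Y := by
  have hq : ∀ x : Fin n → ℝ, x ⬝ᵥ (Y - X) *ᵥ x = 0 := by
    intro x
    have a1 := by simpa using h1.dotProduct_mulVec_nonneg x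
    have a2 := by simpa using h2.dotProduct_mulVec_nonneg x
    have : (X - Y) = -(Y - X) := by abel
    rw [this] at a2
    simp only [Matrix.neg_mulVec, dotProduct_neg] at a2
    linarith
  have hz : ∀ x : Fin n → ℝ, (Y - X) *ᵥ x = 0 := by
    intro x
    have := (h1.dotProduct_mulVec_zero_iff x).mp (by simpa using hq x)
    exact this
  have : Y - X = 0 := by
    ext i j
    have := congrFun (hz (Pi.single j 1)) i
    simpa [Matrix.mulVec_single] using this
  have := sub_eq_zero.mp this
  exact this.symm


variable {n : ℕ}

lemma quad_continuous (M : Mat n) : Continuous fun x : Fin n → ℝ => x ⬝ᵥ M *ᵥ x := by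
  have : (fun x : Fin n → ℝ => x ⬝ᵥ M *ᵥ x)
      = fun x => ∑ i, x i * ∑ j, M i j * x j := by
    ext x; simp [dotProduct, Matrix.mulVec]
  rw [this]
  exact continuous_finset_sum _ fun i _ =>
    (continuous_apply i).mul (continuous_finset_sum _ fun j _ =>
      (continuous_const.mul (continuous_apply j)))

lemma quad_smul (M : Mat n) (c : ℝ) (x : Fin n → ℝ) :
    (c • x) ⬝ᵥ M *ᵥ (c • x) = c ^ 2 * (x ⬝ᵥ M *ᵥ x) := by
  rw [Matrix.mulVec_smul, dotProduct_smul, smul_dotProduct]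
  ring_nf

/-- For `Q` positive definite and `P` positive semidefinite, there is `0 < ε ≤ 1`
with `ε • P ≤ Q`. -/
lemma exists_eps (hn : 0 < n) {Q : Mat n} (hQ : Q.PosDef) {P : Mat n} (hP : P.PosSemidef) :
    ∃ ε : ℝ, 0 < ε ∧ ε ≤ 1 ∧ (Q - ε • P).PosSemidef := by
  haveI : Nonempty (Fin n) := ⟨⟨0, hn⟩⟩
  have hsph : (Metric.sphere (0 : Fin n → ℝ) 1).Nonempty :=
    NormedSpace.sphere_nonempty.mpr zero_le_one
  have hcomp : IsCompact (Metric.sphere (0 : Fin n → ℝ) 1) := isCompact_sphere _ _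
  obtain ⟨u, hu, humin⟩ := hcomp.exists_isMinOn hsph (quad_continuous Q).continuousOn
  obtain ⟨v, hv, hvmax⟩ := hcomp.exists_isMaxOn hsph (quad_continuous P).continuousOn
  set c : ℝ := u ⬝ᵥ Q *ᵥ u with hc
  set d : ℝ := v ⬝ᵥ P *ᵥ v with hd
  have hune : u ≠ 0 := by
    intro h0
    have := Metric.mem_sphere.mp hu
    rw [h0] at this; simp at this
  have hcpos : 0 < c := by simpa using hQ.dotProduct_mulVec_pos hune
  have hdnn : 0 ≤ d := by simpa using hP.dotProduct_mulVec_nonneg v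
  refine ⟨c / (c + d), div_pos hcpos (by linarith), ?_, ?_⟩
  · rw [div_le_one (by linarith)]; linarith
  · set ε := c / (c + d) with hε
    have hεd : ε * d ≤ c := by
      rw [hε, div_mul_eq_mul_div, div_le_iff₀ (by linarith)]
      nlinarith
    have hεpos : 0 < ε := div_pos hcpos (by linarith)
    refine Matrix.PosSemidef.of_dotProduct_mulVec_nonneg (hQ.isHermitian.sub (by
      unfold Matrix.IsHermitian at *
      rw [conjTranspose_smul, hP.isHermitian]
      simp)) fun x => ?_
    simp only [star_trivial, Matrix.sub_mulVec, dotProduct_sub, Matrix.smul_mulVec,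
      dotProduct_smul, smul_eq_mul]
    rcases eq_or_ne x 0 with rfl | hx
    · simp
    · have hnx : ‖x‖ ≠ 0 := norm_ne_zero_iff.mpr hx
      set w : Fin n → ℝ := ‖x‖⁻¹ • x with hw
      have hwsph : w ∈ Metric.sphere (0 : Fin n → ℝ) 1 := by
        simp [hw, norm_smul, inv_mul_cancel₀ hnx]
      have hxw : x = ‖x‖ • w := by
        rw [hw, smul_smul, mul_inv_cancel₀ hnx, one_smul]
      have h1 : x ⬝ᵥ Q *ᵥ x = ‖x‖ ^ 2 * (w ⬝ᵥ Q *ᵥ w) := by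
        conv_lhs => rw [hxw]
        exact quad_smul Q _ w
      have h2 : x ⬝ᵥ P *ᵥ x = ‖x‖ ^ 2 * (w ⬝ᵥ P *ᵥ w) := by
        conv_lhs => rw [hxw]
        exact quad_smul P _ w
      have hQw : c ≤ w ⬝ᵥ Q *ᵥ w := humin hwsph
      have hPw : w ⬝ᵥ P *ᵥ w ≤ d := hvmax hwsph
      have hPwnn : 0 ≤ w ⬝ᵥ P *ᵥ w := by simpa using hP.dotProduct_mulVec_nonneg w
      rw [h1, h2]
      have : ε * (w ⬝ᵥ P *ᵥ w) ≤ w ⬝ᵥ Q *ᵥ w := by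
        calc ε * (w ⬝ᵥ P *ᵥ w) ≤ ε * d := by nlinarith
        _ ≤ c := hεd
        _ ≤ _ := hQw
      nlinarith [sq_nonneg ‖x‖]


variable {n : ℕ}

lemma quad_sum {ι : Type*} (s : Finset ι) (F : ι → Mat n) (x : Fin n → ℝ) :
    x ⬝ᵥ (∑ j ∈ s, F j) *ᵥ x = ∑ j ∈ s, x ⬝ᵥ F j *ᵥ x := by
  classical
  induction s using Finset.induction_on with
  | empty => simp
  | insert _ _ hj ih =>
    rw [Finset.sum_insert hj, Finset.sum_insert hj, Matrix.add_mulVec, dotProduct_add, ih]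

lemma herm_sum {ι : Type*} (s : Finset ι) (F : ι → Mat n) (h : ∀ j ∈ s, (F j).IsHermitian) :
    (∑ j ∈ s, F j).IsHermitian := by
  classical
  induction s using Finset.induction_on with
  | empty => simp [Matrix.isHermitian_zero]
  | insert _ _ hj ih =>
    rw [Finset.sum_insert hj]
    exact (h _ (by simp)).add (ih fun j hjs => h j (by simp [hjs]))



lemma herm_of_psdish {X : Mat n} (h : X.IsHermitian) : Xᵀ = X := by
  rwa [Matrix.IsHermitian, conjTranspose_eq_transpose_of_trivial] at h

lemma key_step {N : ℕ}
    (m : Fin N → ℕ)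
    (A : Mat n)
    (C : ∀ i : Fin N, Matrix (Fin (m i)) (Fin n) ℝ)
    (Q : Mat n)
    (R : ∀ i : Fin N, Matrix (Fin (m i)) (Fin (m i)) ℝ) (hR : ∀ i, (R i).PosDef)
    (L : Matrix (Fin N) (Fin N) ℝ)
    (hLnonneg : ∀ i j, 0 ≤ L i j) (hLrow : ∀ i, ∑ j, L i j = 1)
    (Pa Pb : Fin N → Mat n)
    (hPa : ∀ i, (Pa i).PosDef) (hPb : ∀ i, (Pb i).PosDef)
    (hsa : ∀ i, Pa i =
      A * (∑ j, (L i j • (Pa j)⁻¹ + L i j • ((C j)ᵀ * (R j)⁻¹ * C j)))⁻¹ * Aᵀ + Q)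
    (hsb : ∀ i, Pb i =
      A * (∑ j, (L i j • (Pb j)⁻¹ + L i j • ((C j)ᵀ * (R j)⁻¹ * C j)))⁻¹ * Aᵀ + Q)
    {β ε : ℝ} (hβ : 1 ≤ β) (hε : 0 < ε)
    (hQε : ∀ i, (Q - ε • Pb i).PosSemidef)
    (h : ∀ j, (β • Pb j - Pa j).PosSemidef) :
    ∀ i, ((β - (β - 1) * ε) • Pb i - Pa i).PosSemidef := by
  intro i
  have hβ0 : (0:ℝ) < β := lt_of_lt_of_le one_pos hβ
  set S : ∀ j : Fin N, Mat n := fun j => (C j)ᵀ * (R j)⁻¹ * C j with hSdef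
  have hSpsd : ∀ j, (S j).PosSemidef := fun j =>
    conj_psd' (Matrix.posDef_inv_iff.mpr (hR j)).posSemidef (C j)
  set Ma : Mat n := ∑ j, (L i j • (Pa j)⁻¹ + L i j • S j) with hMa
  set Mb : Mat n := ∑ j, (L i j • (Pb j)⁻¹ + L i j • S j) with hMb
  -- positive definiteness of Ma, Mb
  have hMpd : ∀ (P : Fin N → Mat n), (∀ j, (P j).PosDef) →
      (∑ j, (L i j • (P j)⁻¹ + L i j • S j)).PosDef := by
    intro P hP
    have hPinv : ∀ j, ((P j)⁻¹).PosDef := fun j => Matrix.posDef_inv_iff.mpr (hP j)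
    refine Matrix.PosDef.of_dotProduct_mulVec_pos ?_ ?_
    · exact herm_sum _ _ fun j _ =>
        (herm_smul (hPinv j).isHermitian).add (herm_smul (hSpsd j).isHermitian)
    · intro x hx
      simp only [star_trivial]
      rw [quad_sum]
      have hterm : ∀ j, x ⬝ᵥ (L i j • (P j)⁻¹ + L i j • S j) *ᵥ x
          = L i j * (x ⬝ᵥ (P j)⁻¹ *ᵥ x) + L i j * (x ⬝ᵥ S j *ᵥ x) := by
        intro j
        rw [Matrix.add_mulVec, dotProduct_add, Matrix.smul_mulVec,
          Matrix.smul_mulVec, dotProduct_smul, dotProduct_smul]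
        simp [smul_eq_mul]
      have hex : ∃ j : Fin N, 0 < L i j := by
        by_contra hcon
        push_neg at hcon
        have : ∑ j, L i j = 0 := Finset.sum_eq_zero fun j _ =>
          le_antisymm (hcon j) (hLnonneg i j)
        rw [hLrow i] at this; norm_num at this
      obtain ⟨j0, hj0⟩ := hex
      refine Finset.sum_pos' (fun j _ => ?_) ⟨j0, Finset.mem_univ j0, ?_⟩
      · rw [hterm j]
        have := psd_quad (hPinv j).posSemidef x
        have := psd_quad (hSpsd j) x
        have := hLnonneg i j
        positivity
      · rw [hterm j0]
        have h1 := pd_quad (hPinv j0) hx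
        have h2 := psd_quad (hSpsd j0) x
        nlinarith
  have hMapd : Ma.PosDef := hMpd Pa hPa
  have hMbpd : Mb.PosDef := hMpd Pb hPb
  -- step 1 : Ma - β⁻¹ • Mb is PSD
  have step1 : (Ma - β⁻¹ • Mb).PosSemidef := by
    have : Ma - β⁻¹ • Mb = ∑ j, (L i j • ((Pa j)⁻¹ - β⁻¹ • (Pb j)⁻¹)
        + (L i j * (1 - β⁻¹)) • S j) := by
      rw [hMa, hMb, Finset.smul_sum, ← Finset.sum_sub_distrib]
      refine Finset.sum_congr rfl fun j _ => ?_
      module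
    rw [this]
    refine psd_sum _ _ fun j _ => Matrix.PosSemidef.add ?_ ?_
    · refine psd_smul (hLnonneg i j) ?_
      have hinv : (β • Pb j)⁻¹ = β⁻¹ • (Pb j)⁻¹ :=
        smul_inv'' (ne_of_gt hβ0) ((Matrix.isUnit_iff_isUnit_det _).mp (hPb j).isUnit)
      rw [← hinv]
      exact inv_antitone (hPa j) (h j)
    · refine psd_smul ?_ (hSpsd j)
      have : β⁻¹ ≤ 1 := by
        rw [inv_le_one_iff₀]; right; exact hβ
      have := hLnonneg i j
      nlinarith
  -- step 2 : β • Mb⁻¹ - Ma⁻¹ is PSD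
  have step2 : (β • Mb⁻¹ - Ma⁻¹).PosSemidef := by
    have hpd : (β⁻¹ • Mb).PosDef := pd_smul (by positivity) hMbpd
    have := inv_antitone hpd step1
    rwa [smul_inv'' (by positivity) ((Matrix.isUnit_iff_isUnit_det _).mp hMbpd.isUnit),
      inv_inv] at this
  -- step 3 : conjugate by A
  have step3 : (β • (A * Mb⁻¹ * Aᵀ) - A * Ma⁻¹ * Aᵀ).PosSemidef := by
    have := conj_psd step2 A
    rwa [Matrix.mul_sub, Matrix.sub_mul, Matrix.mul_smul, Matrix.smul_mul] at this
  -- step 4 : conclude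
  have hA1 : A * Ma⁻¹ * Aᵀ = Pa i - Q := by rw [hsa i]; abel
  have hA2 : A * Mb⁻¹ * Aᵀ = Pb i - Q := by rw [hsb i]; abel
  rw [hA1, hA2] at step3
  have step5 : ((β - 1) • (Q - ε • Pb i)).PosSemidef := psd_smul (by linarith) (hQε i)
  have final := step3.add step5
  have : β • (Pb i - Q) - (Pa i - Q) + (β - 1) • (Q - ε • Pb i)
      = (β - (β - 1) * ε) • Pb i - Pa i := by module
  rwa [this] at final



end HCRE

open HCRE in
/-- Uniqueness of the group of positive definite solutions to the
harmonic-coupled Riccati equations. -/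
theorem hcre_solution_unique
    (n N : ℕ) (hn : 0 < n) (hN : 0 < N)
    (m : Fin N → ℕ) (hm : ∀ i, 0 < m i)
    (A : Matrix (Fin n) (Fin n) ℝ) (hA : IsUnit A.det)
    (C : ∀ i : Fin N, Matrix (Fin (m i)) (Fin n) ℝ)
    (hObs : (∑ k ∈ Finset.range n, (A ^ k)ᵀ * (∑ i, (C i)ᵀ * C i) * A ^ k).PosDef)
    (Q : Matrix (Fin n) (Fin n) ℝ) (hQ : Q.PosDef)
    (R : ∀ i : Fin N, Matrix (Fin (m i)) (Fin (m i)) ℝ) (hR : ∀ i, (R i).PosDef)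
    (L : Matrix (Fin N) (Fin N) ℝ)
    (hLnonneg : ∀ i j, 0 ≤ L i j) (hLrow : ∀ i, ∑ j, L i j = 1)
    (hLprim : ∃ k : ℕ, 0 < k ∧ ∀ i j, 0 < (L ^ k) i j)
    (P1 P2 : Fin N → Matrix (Fin n) (Fin n) ℝ)
    (hP1pos : ∀ i, (P1 i).PosDef) (hP2pos : ∀ i, (P2 i).PosDef)
    (hsol1 : ∀ i, P1 i =
      A * (∑ j, (L i j • (P1 j)⁻¹ + L i j • ((C j)ᵀ * (R j)⁻¹ * C j)))⁻¹ * Aᵀ + Q)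
    (hsol2 : ∀ i, P2 i =
      A * (∑ j, (L i j • (P2 j)⁻¹ + L i j • ((C j)ᵀ * (R j)⁻¹ * C j)))⁻¹ * Aᵀ + Q) :
    ∀ i : Fin N, P1 i = P2 i := by
  haveI : Nonempty (Fin N) := ⟨⟨0, hN⟩⟩
  -- monotone-in-scalar helpers
  have hup : ∀ (X Y : Mat n), X.PosSemidef → ∀ β' β : ℝ, β' ≤ β →
      (β' • X - Y).PosSemidef → (β • X - Y).PosSemidef := by
    intro X Y hX β' β hle hpsd
    have := (psd_smul (by linarith : (0:ℝ) ≤ β - β') hX).add hpsd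
    have heq : (β - β') • X + (β' • X - Y) = β • X - Y := by module
    rwa [heq] at this
  -- the set of admissible scale factors
  set T : Set ℝ := {β | 1 ≤ β ∧ ∀ i, (β • P2 i - P1 i).PosSemidef ∧ (β • P1 i - P2 i).PosSemidef}
    with hT
  -- T is nonempty
  have hex : ∀ (X Y : Fin N → Mat n), (∀ i, (X i).PosDef) → (∀ i, (Y i).PosDef) →
      ∀ i, ∃ β : ℝ, 1 ≤ β ∧ (β • X i - Y i).PosSemidef := by
    intro X Y hX hY i
    obtain ⟨ε, hε, hε1, hpsd⟩ := exists_eps hn (hX i) (hY i).posSemidef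
    have hεinv : (0:ℝ) < ε⁻¹ := inv_pos.mpr hε
    refine ⟨ε⁻¹, by nlinarith [mul_inv_cancel₀ (ne_of_gt hε)], ?_⟩
    have := psd_smul hεinv.le hpsd
    rwa [smul_sub, smul_smul, inv_mul_cancel₀ (ne_of_gt hε), one_smul] at this
  choose b1 hb1 hb1' using hex P2 P1 hP2pos hP1pos
  choose b2 hb2 hb2' using hex P1 P2 hP1pos hP2pos
  set β₀ : ℝ := Finset.univ.sup' (Finset.univ_nonempty) (fun i => max (b1 i) (b2 i)) with hβ₀
  have hβ₀T : β₀ ∈ T := by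
    have hsup : ∀ i : Fin N, max (b1 i) (b2 i) ≤ β₀ := fun i =>
      Finset.le_sup' (f := fun i => max (b1 i) (b2 i)) (Finset.mem_univ i)
    refine ⟨le_trans (hb1 ⟨0, hN⟩) (le_trans (le_max_left _ _) (hsup _)), fun i => ⟨?_, ?_⟩⟩
    · exact hup _ _ (hP2pos i).posSemidef _ _
        (le_trans (le_max_left _ _) (hsup i)) (hb1' i)
    · exact hup _ _ (hP1pos i).posSemidef _ _
        (le_trans (le_max_right _ _) (hsup i)) (hb2' i)
  have hTne : T.Nonempty := ⟨β₀, hβ₀T⟩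
  have hbdd : BddBelow T := ⟨1, fun β hβ => hβ.1⟩
  set βs : ℝ := sInf T with hβs
  have hβs1 : 1 ≤ βs := le_csInf hTne fun β hβ => hβ.1
  -- sInf T belongs to T
  have hinf_mem : ∀ (X Y : Mat n), X.PosDef → Y.PosDef →
      (∀ β ∈ T, (β • X - Y).PosSemidef) → (βs • X - Y).PosSemidef := by
    intro X Y hX hY hall
    refine psd_def ((herm_smul hX.isHermitian).sub hY.isHermitian) fun x => ?_
    have hq : ∀ β ∈ T, 0 ≤ β * (x ⬝ᵥ X *ᵥ x) - x ⬝ᵥ Y *ᵥ x := by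
      intro β hβ
      have := psd_quad (hall β hβ) x
      rw [Matrix.sub_mulVec, dotProduct_sub, Matrix.smul_mulVec, dotProduct_smul,
        smul_eq_mul] at this
      linarith
    rw [Matrix.sub_mulVec, dotProduct_sub, Matrix.smul_mulVec, dotProduct_smul,
      smul_eq_mul]
    set a : ℝ := x ⬝ᵥ X *ᵥ x with ha
    set c : ℝ := x ⬝ᵥ Y *ᵥ x with hc
    have hann : 0 ≤ a := psd_quad hX.posSemidef x
    rcases eq_or_lt_of_le hann with heq | hlt
    · have := hq β₀ hβ₀T
      rw [← heq] at this ⊢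
      linarith
    · have hdiv : c / a ≤ βs := le_csInf hTne fun β hβ => by
        have := hq β hβ
        rw [div_le_iff₀ hlt]
        linarith
      rw [div_le_iff₀ hlt] at hdiv
      linarith
  have hmem : βs ∈ T := by
    refine ⟨hβs1, fun i => ⟨?_, ?_⟩⟩
    · exact hinf_mem _ _ (hP2pos i) (hP1pos i) fun β hβ => (hβ.2 i).1
    · exact hinf_mem _ _ (hP1pos i) (hP2pos i) fun β hβ => (hβ.2 i).2
  -- show βs = 1
  have hβs_eq : βs = 1 := by
    by_contra hne
    have hβsgt : 1 < βs := lt_of_le_of_ne hβs1 (Ne.symm hne)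
    -- choose a uniform ε
    have hexe : ∀ i : Fin N, ∃ ε : ℝ, 0 < ε ∧ ε ≤ 1 ∧
        (Q - ε • P2 i).PosSemidef ∧ (Q - ε • P1 i).PosSemidef := by
      intro i
      obtain ⟨e1, he1, he11, hp1⟩ := exists_eps hn hQ (hP2pos i).posSemidef
      obtain ⟨e2, he2, he21, hp2⟩ := exists_eps hn hQ (hP1pos i).posSemidef
      refine ⟨min e1 e2, lt_min he1 he2, le_trans (min_le_left _ _) he11, ?_, ?_⟩
      · have := (psd_smul (sub_nonneg.mpr (min_le_left e1 e2))
          (hP2pos i).posSemidef).add hp1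
        have heq : (e1 - min e1 e2) • P2 i + (Q - e1 • P2 i) = Q - (min e1 e2) • P2 i := by
          module
        rwa [heq] at this
      · have := (psd_smul (sub_nonneg.mpr (min_le_right e1 e2))
          (hP1pos i).posSemidef).add hp2
        have heq : (e2 - min e1 e2) • P1 i + (Q - e2 • P1 i) = Q - (min e1 e2) • P1 i := by
          module
        rwa [heq] at this
    choose e he hee1 hQe2 hQe1 using hexe
    set ε : ℝ := Finset.univ.inf' Finset.univ_nonempty e with hεdef
    have hεpos : 0 < ε := by
      obtain ⟨i, _, hi⟩ := Finset.exists_mem_eq_inf' Finset.univ_nonempty e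
      rw [hεdef, hi]; exact he i
    have hεle1 : ε ≤ 1 := by
      obtain ⟨i, _, hi⟩ := Finset.exists_mem_eq_inf' Finset.univ_nonempty e
      rw [hεdef, hi]; exact hee1 i
    have hQε2 : ∀ i, (Q - ε • P2 i).PosSemidef := by
      intro i
      have hle : ε ≤ e i := Finset.inf'_le _ (Finset.mem_univ i)
      have := (psd_smul (by linarith : (0:ℝ) ≤ e i - ε) (hP2pos i).posSemidef).add (hQe2 i)
      have heq : (e i - ε) • P2 i + (Q - e i • P2 i) = Q - ε • P2 i := by module
      rwa [heq] at this
    have hQε1 : ∀ i, (Q - ε • P1 i).PosSemidef := by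
      intro i
      have hle : ε ≤ e i := Finset.inf'_le _ (Finset.mem_univ i)
      have := (psd_smul (by linarith : (0:ℝ) ≤ e i - ε) (hP1pos i).posSemidef).add (hQe1 i)
      have heq : (e i - ε) • P1 i + (Q - e i • P1 i) = Q - ε • P1 i := by module
      rwa [heq] at this
    set β' : ℝ := βs - (βs - 1) * ε with hβ'
    have h1 := key_step m A C Q R hR L hLnonneg hLrow P1 P2 hP1pos hP2pos hsol1 hsol2
      hβs1 hεpos hQε2 (fun j => (hmem.2 j).1)
    have h2 := key_step m A C Q R hR L hLnonneg hLrow P2 P1 hP2pos hP1pos hsol2 hsol1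
      hβs1 hεpos hQε1 (fun j => (hmem.2 j).2)
    have hβ'T : β' ∈ T := ⟨by nlinarith, fun i => ⟨h1 i, h2 i⟩⟩
    have := csInf_le hbdd hβ'T
    have : (βs - 1) * ε > 0 := by nlinarith
    rw [hβ'] at *
    linarith [csInf_le hbdd hβ'T]
  intro i
  have hp1 := (hmem.2 i).1
  have hp2 := (hmem.2 i).2
  rw [hβs_eq, one_smul] at hp1 hp2
  exact psd_antisymm hp1 hp2
end

section
/- Let {P_i}_{i=1}^N be positive definite solutions of the HCREs, let P_{i,k} be the iterates of the iterative law started from arbitrary positive definite initial matrices, and set P̃_{i,k} = (∑_{j=1}^N l_{ij} P_{j,k}^{-1})^{-1}, P̃_i = (∑_{j=1}^N l_{ij} P_j^{-1})^{-1}. Define Ã_{ij,k} = √(l_{ij}) · P̃_{i,k} P_{j,k}^{-1} · A (P̃_{j,k-1}^{-1} + S_j)^{-1} P̃_{j,k-1}^{-1} and Ã_{ij} = √(l_{ij}) · P̃_i P_j^{-1} · A (P̃_j^{-1} + S_j)^{-1} P̃_j^{-1}. Then for every i ∈ {1, …, N} and every k ≥ 1, P̃_{i,k} − P̃_i = ∑_{j=1}^N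 Ã_{ij,k} (P̃_{j,k-1} − P̃_j) Ã_{ij}ᵀ. -/
open Matrix Filter

section HCREAux

variable {n : ℕ}

private lemma hcre_posdef_transpose {M : Matrix (Fin n) (Fin n) ℝ} (h : M.IsHermitian) :
    Mᵀ = M := by
  rwa [Matrix.IsHermitian, Matrix.conjTranspose_eq_transpose_of_trivial] at h

private lemma hcre_smul_posSemidef {c : ℝ} (hc : 0 ≤ c) {M : Matrix (Fin n) (Fin n) ℝ}
    (h : M.PosSemidef) : (c • M).PosSemidef := by
  constructor
  · rw [Matrix.IsHermitian, Matrix.conjTranspose_smul, h.1.eq]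
    simp
  · intro x
    exact (h.smul hc).2 x

private lemma hcre_smul_posDef {c : ℝ} (hc : 0 < c) {M : Matrix (Fin n) (Fin n) ℝ}
    (h : M.PosDef) : (c • M).PosDef := by
  constructor
  · rw [Matrix.IsHermitian, Matrix.conjTranspose_smul, h.1.eq]
    simp
  · intro x hx
    exact (h.smul hc).2 hx

private lemma hcre_sum_posSemidef {ι : Type*} (s : Finset ι)
    (f : ι → Matrix (Fin n) (Fin n) ℝ) (h : ∀ i ∈ s, (f i).PosSemidef) :
    (∑ i ∈ s, f i).PosSemidef :=
  Finset.sum_induction f _ (fun _ _ ha hb => ha.add hb) Matrix.PosSemidef.zero h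

private lemma hcre_sum_posDef {N : ℕ} {f : Fin N → Matrix (Fin n) (Fin n) ℝ}
    {w : Fin N → ℝ} (hw : ∀ j, 0 ≤ w j) (hsum : ∑ j, w j = 1)
    (hf : ∀ j, (f j).PosDef) : (∑ j, w j • f j).PosDef := by
  obtain ⟨j0, hj0⟩ : ∃ j, 0 < w j := by
    by_contra hcon
    push_neg at hcon
    have : ∑ j, w j = 0 := Finset.sum_eq_zero fun j _ => le_antisymm (hcon j) (hw j)
    rw [this] at hsum
    norm_num at hsum
  rw [← Finset.add_sum_erase _ _ (Finset.mem_univ j0)]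
  exact (hcre_smul_posDef hj0 (hf j0)).add_posSemidef
    (hcre_sum_posSemidef _ _ fun j _ => hcre_smul_posSemidef (hw j) (hf j).posSemidef)

private lemma hcre_inv_sub_inv_left {X Y : Matrix (Fin n) (Fin n) ℝ}
    (hX : IsUnit X.det) (hY : IsUnit Y.det) :
    X⁻¹ - Y⁻¹ = X⁻¹ * (Y - X) * Y⁻¹ := by
  have h1 : X⁻¹ * Y * Y⁻¹ = X⁻¹ := by
    rw [Matrix.mul_assoc, Matrix.mul_nonsing_inv _ hY, Matrix.mul_one]
  have h2 : X⁻¹ * X * Y⁻¹ = Y⁻¹ := by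
    rw [Matrix.nonsing_inv_mul _ hX, Matrix.one_mul]
  rw [Matrix.mul_sub, Matrix.sub_mul, h1, h2]

private lemma hcre_inv_sub_inv_right {X Y : Matrix (Fin n) (Fin n) ℝ}
    (hX : IsUnit X.det) (hY : IsUnit Y.det) :
    X⁻¹ - Y⁻¹ = Y⁻¹ * (Y - X) * X⁻¹ := by
  have h1 : Y⁻¹ * Y * X⁻¹ = X⁻¹ := by
    rw [Matrix.nonsing_inv_mul _ hY, Matrix.one_mul]
  have h2 : Y⁻¹ * X * X⁻¹ = Y⁻¹ := by
    rw [Matrix.mul_assoc, Matrix.mul_nonsing_inv _ hX, Matrix.mul_one]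
  rw [Matrix.mul_sub, Matrix.sub_mul, h1, h2]

end HCREAux

/-- For the HCRE iterates and a group of positive definite solutions,
the gap of the harmonic means satisfies, for every `k ≥ 1` (written `k + 1`),
`P̃_{i,k+1} − P̃_i = ∑_j Ã_{ij,k+1} (P̃_{j,k} − P̃_j) Ã_{ij}ᵀ`. -/
theorem hcre_iterate_gap_identity
    (n N : ℕ) (hn : 0 < n) (hN : 0 < N)
    (m : Fin N → ℕ) (hm : ∀ i, 0 < m i)
    (A : Matrix (Fin n) (Fin n) ℝ) (hA : IsUnit A.det)
    (C : ∀ i : Fin N, Matrix (Fin (m i)) (Fin n) ℝ)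
    (hObs : (∑ k ∈ Finset.range n, (A ^ k)ᵀ * (∑ i, (C i)ᵀ * C i) * A ^ k).PosDef)
    (Q : Matrix (Fin n) (Fin n) ℝ) (hQ : Q.PosDef)
    (R : ∀ i : Fin N, Matrix (Fin (m i)) (Fin (m i)) ℝ) (hR : ∀ i, (R i).PosDef)
    (L : Matrix (Fin N) (Fin N) ℝ)
    (hLnonneg : ∀ i j, 0 ≤ L i j) (hLrow : ∀ i, ∑ j, L i j = 1)
    (hLprim : ∃ k : ℕ, 0 < k ∧ ∀ i j, 0 < (L ^ k) i j)
    (S : Fin N → Matrix (Fin n) (Fin n) ℝ)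
    (hS : ∀ j, S j = ∑ h, L j h • ((C h)ᵀ * (R h)⁻¹ * C h))
    (P : Fin N → Matrix (Fin n) (Fin n) ℝ) (hPpos : ∀ i, (P i).PosDef)
    (hsol : ∀ i, P i =
      A * (∑ j, (L i j • (P j)⁻¹ + L i j • ((C j)ᵀ * (R j)⁻¹ * C j)))⁻¹ * Aᵀ + Q)
    (P0 : Fin N → Matrix (Fin n) (Fin n) ℝ) (hP0 : ∀ i, (P0 i).PosDef)
    (Pseq : ℕ → Fin N → Matrix (Fin n) (Fin n) ℝ)
    (hinit : Pseq 0 = P0)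
    (hiter : ∀ k i, Pseq (k + 1) i =
      A * (∑ j, (L i j • (Pseq k j)⁻¹ + L i j • ((C j)ᵀ * (R j)⁻¹ * C j)))⁻¹ * Aᵀ + Q)
    (Ptil : Fin N → Matrix (Fin n) (Fin n) ℝ)
    (hPtil : ∀ i, Ptil i = (∑ j, L i j • (P j)⁻¹)⁻¹)
    (Ptilseq : ℕ → Fin N → Matrix (Fin n) (Fin n) ℝ)
    (hPtilseq : ∀ k i, Ptilseq k i = (∑ j, L i j • (Pseq k j)⁻¹)⁻¹)
    (Atil : Fin N → Fin N → Matrix (Fin n) (Fin n) ℝ)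
    (hAtil : ∀ i j, Atil i j = Real.sqrt (L i j) •
      (Ptil i * (P j)⁻¹ * (A * ((Ptil j)⁻¹ + S j)⁻¹ * (Ptil j)⁻¹)))
    (Atilseq : ℕ → Fin N → Fin N → Matrix (Fin n) (Fin n) ℝ)
    (hAtilseq : ∀ k i j, Atilseq (k + 1) i j = Real.sqrt (L i j) •
      (Ptilseq (k + 1) i * (Pseq (k + 1) j)⁻¹ *
        (A * ((Ptilseq k j)⁻¹ + S j)⁻¹ * (Ptilseq k j)⁻¹))) :
    ∀ (i : Fin N) (k : ℕ),
      Ptilseq (k + 1) i - Ptil i =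
        ∑ j, Atilseq (k + 1) i j * (Ptilseq k j - Ptil j) * (Atil i j)ᵀ := by
  -- unit determinant of a positive definite matrix
  have du : ∀ {M : Matrix (Fin n) (Fin n) ℝ}, M.PosDef → IsUnit M.det :=
    fun h => h.det_pos.ne'.isUnit
  -- basic positivity facts
  have hCRC : ∀ h : Fin N, ((C h)ᵀ * (R h)⁻¹ * C h).PosSemidef := by
    intro h
    have := ((hR h).inv).posSemidef.conjTranspose_mul_mul_same (C h)
    simpa [Matrix.conjTranspose_eq_transpose_of_trivial] using this
  have hSps : ∀ j, (S j).PosSemidef := by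
    intro j
    rw [hS j]
    exact hcre_sum_posSemidef _ _ fun h _ => hcre_smul_posSemidef (hLnonneg j h) (hCRC h)
  have hHarm : ∀ (g : Fin N → Matrix (Fin n) (Fin n) ℝ), (∀ j, (g j).PosDef) →
      ∀ i, (∑ j, L i j • (g j)⁻¹).PosDef :=
    fun g hg i => hcre_sum_posDef (hLnonneg i) (hLrow i) fun j => (hg j).inv
  have hPseqpos : ∀ k i, (Pseq k i).PosDef := by
    intro k
    induction k with
    | zero => intro i; rw [hinit]; exact hP0 i
    | succ k ih =>
      intro i
      rw [hiter k i]
      have hsum : (∑ j, (L i j • (Pseq k j)⁻¹ + L i j • ((C j)ᵀ * (R j)⁻¹ * C j))).PosDef := by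
        rw [Finset.sum_add_distrib]
        exact (hHarm (Pseq k) ih i).add_posSemidef
          (hcre_sum_posSemidef _ _ fun j _ => hcre_smul_posSemidef (hLnonneg i j) (hCRC j))
      have hmid := (hsum.inv).posSemidef.mul_mul_conjTranspose_same A
      rw [Matrix.conjTranspose_eq_transpose_of_trivial] at hmid
      exact Matrix.PosDef.posSemidef_add hmid hQ
  have hPtilpos : ∀ i, (Ptil i).PosDef := fun i => by
    rw [hPtil]; exact (hHarm P hPpos i).inv
  have hPtilseqpos : ∀ k i, (Ptilseq k i).PosDef := fun k i => by
    rw [hPtilseq]; exact (hHarm (Pseq k) (hPseqpos k) i).inv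
  -- inverse of the harmonic mean is the weighted sum of inverses
  have hPtilinv : ∀ i, (Ptil i)⁻¹ = ∑ j, L i j • (P j)⁻¹ := fun i => by
    rw [hPtil, Matrix.nonsing_inv_nonsing_inv _ (du (hHarm P hPpos i))]
  have hPtilseqinv : ∀ k i, (Ptilseq k i)⁻¹ = ∑ j, L i j • (Pseq k j)⁻¹ := fun k i => by
    rw [hPtilseq, Matrix.nonsing_inv_nonsing_inv _ (du (hHarm (Pseq k) (hPseqpos k) i))]
  -- reformulated iteration and fixed point equations
  have hiter' : ∀ k j, Pseq (k + 1) j = A * ((Ptilseq k j)⁻¹ + S j)⁻¹ * Aᵀ + Q := by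
    intro k j
    rw [hiter k j, Finset.sum_add_distrib, ← hPtilseqinv k j, ← hS j]
  have hsol' : ∀ j, P j = A * ((Ptil j)⁻¹ + S j)⁻¹ * Aᵀ + Q := by
    intro j
    rw [hsol j, Finset.sum_add_distrib, ← hPtilinv j, ← hS j]
  -- positive definiteness of the denominators
  have hWk : ∀ k j, ((Ptilseq k j)⁻¹ + S j).PosDef :=
    fun k j => ((hPtilseqpos k j).inv).add_posSemidef (hSps j)
  have hW : ∀ j, ((Ptil j)⁻¹ + S j).PosDef :=
    fun j => ((hPtilpos j).inv).add_posSemidef (hSps j)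
  -- symmetry facts
  have tP : ∀ j, (P j)ᵀ = P j := fun j => hcre_posdef_transpose (hPpos j).isHermitian
  have tPtil : ∀ j, (Ptil j)ᵀ = Ptil j := fun j => hcre_posdef_transpose (hPtilpos j).isHermitian
  have tS : ∀ j, (S j)ᵀ = S j := fun j => hcre_posdef_transpose (hSps j).isHermitian
  intro i k
  -- step 1 : gap of the iterates
  have step1 : ∀ j, Pseq (k + 1) j - P j =
      A * (((Ptilseq k j)⁻¹ + S j)⁻¹ *
        ((Ptilseq k j)⁻¹ * (Ptilseq k j - Ptil j) * (Ptil j)⁻¹) *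
        ((Ptil j)⁻¹ + S j)⁻¹) * Aᵀ := by
    intro j
    have e1 : (Ptil j)⁻¹ - (Ptilseq k j)⁻¹ =
        (Ptilseq k j)⁻¹ * (Ptilseq k j - Ptil j) * (Ptil j)⁻¹ :=
      hcre_inv_sub_inv_right (du (hPtilpos j)) (du (hPtilseqpos k j))
    have e2 : ((Ptilseq k j)⁻¹ + S j)⁻¹ - ((Ptil j)⁻¹ + S j)⁻¹ =
        ((Ptilseq k j)⁻¹ + S j)⁻¹ * ((Ptil j)⁻¹ - (Ptilseq k j)⁻¹) * ((Ptil j)⁻¹ + S j)⁻¹ := by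
      have := hcre_inv_sub_inv_left (du (hWk k j)) (du (hW j))
      rwa [add_sub_add_right_eq_sub] at this
    rw [hiter' k j, hsol' j, add_sub_add_right_eq_sub, ← Matrix.sub_mul, ← Matrix.mul_sub,
      e2, e1]
  -- step 2 : expand the harmonic-mean gap
  have step2 : Ptilseq (k + 1) i - Ptil i =
      Ptilseq (k + 1) i * ((Ptil i)⁻¹ - (Ptilseq (k + 1) i)⁻¹) * Ptil i := by
    have h1 : Ptilseq (k + 1) i * (Ptil i)⁻¹ * Ptil i = Ptilseq (k + 1) i := by
      rw [Matrix.mul_assoc, Matrix.nonsing_inv_mul _ (du (hPtilpos i)), Matrix.mul_one]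
    have h2 : Ptilseq (k + 1) i * (Ptilseq (k + 1) i)⁻¹ * Ptil i = Ptil i := by
      rw [Matrix.mul_nonsing_inv _ (du (hPtilseqpos (k + 1) i)), Matrix.one_mul]
    rw [Matrix.mul_sub, Matrix.sub_mul, h1, h2]
  have hdiff : (Ptil i)⁻¹ - (Ptilseq (k + 1) i)⁻¹ =
      ∑ j, L i j • ((P j)⁻¹ - (Pseq (k + 1) j)⁻¹) := by
    rw [hPtilinv i, hPtilseqinv (k + 1) i, ← Finset.sum_sub_distrib]
    exact Finset.sum_congr rfl fun j _ => (smul_sub _ _ _).symm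
  calc Ptilseq (k + 1) i - Ptil i
      = Ptilseq (k + 1) i * ((Ptil i)⁻¹ - (Ptilseq (k + 1) i)⁻¹) * Ptil i := step2
    _ = ∑ j, L i j • (Ptilseq (k + 1) i * ((P j)⁻¹ - (Pseq (k + 1) j)⁻¹) * Ptil i) := by
        rw [hdiff, Finset.mul_sum, Finset.sum_mul]
        exact Finset.sum_congr rfl fun j _ => by rw [mul_smul_comm, smul_mul_assoc]
    _ = ∑ j, Atilseq (k + 1) i j * (Ptilseq k j - Ptil j) * (Atil i j)ᵀ := by
        refine Finset.sum_congr rfl fun j _ => ?_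
        have key : Ptilseq (k + 1) i * ((P j)⁻¹ - (Pseq (k + 1) j)⁻¹) * Ptil i =
            Ptilseq (k + 1) i * (Pseq (k + 1) j)⁻¹ *
                (A * ((Ptilseq k j)⁻¹ + S j)⁻¹ * (Ptilseq k j)⁻¹) *
              (Ptilseq k j - Ptil j) *
              (Ptil i * (P j)⁻¹ * (A * ((Ptil j)⁻¹ + S j)⁻¹ * (Ptil j)⁻¹))ᵀ := by
          have e3 : (P j)⁻¹ - (Pseq (k + 1) j)⁻¹ =
              (Pseq (k + 1) j)⁻¹ * (Pseq (k + 1) j - P j) * (P j)⁻¹ :=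
            hcre_inv_sub_inv_right (du (hPpos j)) (du (hPseqpos (k + 1) j))
          rw [e3, step1 j]
          simp only [Matrix.transpose_mul, Matrix.transpose_nonsing_inv, Matrix.transpose_add,
            tP, tPtil, tS, Matrix.mul_assoc]
        rw [hAtilseq, hAtil, Matrix.transpose_smul, smul_mul_assoc, smul_mul_assoc,
          mul_smul_comm, smul_smul, Real.mul_self_sqrt (hLnonneg i j), key]
end

section
/- Let A be a real n×n matrix, let M be a positive semidefinite real n×n matrix, and let X and Y be positive definite real n×n matrices. Then A (X^{-1} + M)^{-1} Aᵀ − A (Y^{-1} + M)^{-1} Aᵀ = [A (X^{-1} + M)^{-1} X^{-1}] (X − Y) [A (Y^{-1} + M)^{-1} Y^{-1}]ᵀ. -/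
open Matrix

/-- For a real square matrix `A`, a positive semidefinite `M`, and positive
definite `X`, `Y`:
`A (X⁻¹ + M)⁻¹ Aᵀ − A (Y⁻¹ + M)⁻¹ Aᵀ
  = [A (X⁻¹ + M)⁻¹ X⁻¹] (X − Y) [A (Y⁻¹ + M)⁻¹ Y⁻¹]ᵀ`. -/
theorem resolvent_difference_identity
    (n : ℕ) (hn : 0 < n)
    (A M X Y : Matrix (Fin n) (Fin n) ℝ)
    (hM : M.PosSemidef) (hX : X.PosDef) (hY : Y.PosDef) :
    A * (X⁻¹ + M)⁻¹ * Aᵀ - A * (Y⁻¹ + M)⁻¹ * Aᵀ =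
      (A * (X⁻¹ + M)⁻¹ * X⁻¹) * (X - Y) * (A * (Y⁻¹ + M)⁻¹ * Y⁻¹)ᵀ := by
  have hXM : (X⁻¹ + M).PosDef := hX.inv.add_posSemidef hM
  have hYM : (Y⁻¹ + M).PosDef := hY.inv.add_posSemidef hM
  set P := (X⁻¹ + M)⁻¹ with hP
  set Q := (Y⁻¹ + M)⁻¹ with hQ
  have hXdet : IsUnit X.det := isUnit_iff_ne_zero.mpr (ne_of_gt hX.det_pos)
  have hYdet : IsUnit Y.det := isUnit_iff_ne_zero.mpr (ne_of_gt hY.det_pos)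
  have hPdet : IsUnit (X⁻¹ + M).det := isUnit_iff_ne_zero.mpr (ne_of_gt hXM.det_pos)
  have hQdet : IsUnit (Y⁻¹ + M).det := isUnit_iff_ne_zero.mpr (ne_of_gt hYM.det_pos)
  have hQsymm : Qᵀ = Q := by
    rw [hQ, Matrix.transpose_nonsing_inv]
    congr 1
    simpa using hYM.isHermitian.eq
  have hYsymm : (Y⁻¹)ᵀ = Y⁻¹ := by
    rw [Matrix.transpose_nonsing_inv]
    congr 1
    simpa using hY.isHermitian.eq
  have key : P - Q = P * (Y⁻¹ - X⁻¹) * Q := by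
    have : (Y⁻¹ - X⁻¹ : Matrix (Fin n) (Fin n) ℝ) = (Y⁻¹ + M) - (X⁻¹ + M) := by abel
    rw [this, Matrix.mul_sub, Matrix.sub_mul, hP, hQ, Matrix.mul_assoc,
      Matrix.mul_nonsing_inv _ hQdet,
      Matrix.nonsing_inv_mul _ hPdet, Matrix.one_mul, Matrix.mul_one]
  have key2 : X⁻¹ * (X - Y) * Y⁻¹ = Y⁻¹ - X⁻¹ := by
    rw [Matrix.mul_sub, Matrix.sub_mul, Matrix.nonsing_inv_mul _ hXdet,
      Matrix.one_mul, Matrix.mul_assoc, Matrix.mul_nonsing_inv _ hYdet, Matrix.mul_one]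
  calc A * P * Aᵀ - A * Q * Aᵀ
      = A * (P - Q) * Aᵀ := by rw [Matrix.mul_sub, Matrix.sub_mul]
    _ = A * (P * (Y⁻¹ - X⁻¹) * Q) * Aᵀ := by rw [key]
    _ = A * (P * (X⁻¹ * (X - Y) * Y⁻¹) * Q) * Aᵀ := by rw [key2]
    _ = (A * P * X⁻¹) * (X - Y) * (A * Q * Y⁻¹)ᵀ := by
        rw [Matrix.transpose_mul, Matrix.transpose_mul, hQsymm, hYsymm]
        simp only [Matrix.mul_assoc]
end

section
/- Let P_1, …, P_N be positive definite real n×n matrices. Then for any vectors x_1, …, x_N ∈ ℝⁿ, (∑_{i=1}^N P_i x_i)ᵀ (∑_{j=1}^N P_j)^{-1} (∑_{i=1}^N P_i x_i) ≤ ∑_{i=1}^N x_iᵀ P_i x_i. Equivalently, the nN×nN block matrix whose (i,j) block is P_i (∑_{h=1}^N P_h)^{-1} P_j is dominated, in the Loewner order, by the block-diagonal matrix diag(P_1, …, P_N). -/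
open Matrix

private lemma dot_sum_right {ι : Type*} [Fintype ι] (v : ι → ℝ) {κ : Type*} [Fintype κ]
    (f : κ → ι → ℝ) : v ⬝ᵥ (∑ i, f i) = ∑ i, v ⬝ᵥ f i := by
  simp only [dotProduct, Finset.sum_apply, Finset.mul_sum]
  exact Finset.sum_comm

private lemma dot_sum_left {ι : Type*} [Fintype ι] (v : ι → ℝ) {κ : Type*} [Fintype κ]
    (f : κ → ι → ℝ) : (∑ i, f i) ⬝ᵥ v = ∑ i, f i ⬝ᵥ v := by
  simp only [dotProduct, Finset.sum_apply, Finset.sum_mul]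
  exact Finset.sum_comm

private lemma sum_mulVec' {ι : Type*} [Fintype ι] {κ : Type*} [Fintype κ]
    (A : κ → Matrix ι ι ℝ) (v : ι → ℝ) : (∑ i, A i) *ᵥ v = ∑ i, (A i) *ᵥ v :=
  map_sum (Matrix.mulVec.addMonoidHomLeft v) A Finset.univ

/-- For positive definite matrices `P₁, …, P_N` and vectors
`x₁, …, x_N ∈ ℝⁿ`,
`(∑ᵢ Pᵢ xᵢ)ᵀ (∑ⱼ Pⱼ)⁻¹ (∑ᵢ Pᵢ xᵢ) ≤ ∑ᵢ xᵢᵀ Pᵢ xᵢ`;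
equivalently, the `nN×nN` block matrix with `(i,j)` block `Pᵢ (∑ₕ Pₕ)⁻¹ Pⱼ` is dominated
in the Loewner order by `diag(P₁, …, P_N)`. -/
theorem posdef_harmonic_block_inequality
    (n N : ℕ) (hn : 0 < n) (hN : 0 < N)
    (P : Fin N → Matrix (Fin n) (Fin n) ℝ) (hP : ∀ i, (P i).PosDef) :
    (∀ x : Fin N → (Fin n → ℝ),
      (∑ i, (P i).mulVec (x i)) ⬝ᵥ ((∑ j, P j)⁻¹).mulVec (∑ i, (P i).mulVec (x i)) ≤
        ∑ i, x i ⬝ᵥ (P i).mulVec (x i)) ∧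
    ((Matrix.of (fun p q : Fin N × Fin n =>
        (if p.1 = q.1 then P p.1 p.2 q.2 else 0)
          - (P p.1 * (∑ h, P h)⁻¹ * P q.1) p.2 q.2)).PosSemidef) := by
  set S : Matrix (Fin n) (Fin n) ℝ := ∑ j, P j with hSdef
  have hPsymm : ∀ i, (P i)ᵀ = P i := fun i => by
    have := (hP i).isHermitian
    rwa [Matrix.IsHermitian, conjTranspose_eq_transpose_of_trivial] at this
  -- S is positive definite
  have i0 : Fin N := ⟨0, hN⟩
  have hrest : (∑ j ∈ Finset.univ.erase i0, P j).PosSemidef :=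
    Finset.sum_induction P Matrix.PosSemidef (fun a b ha hb => ha.add hb)
      (Matrix.PosSemidef.zero) (fun i _ => (hP i).posSemidef)
  have hS : S.PosDef := by
    have : S = P i0 + ∑ j ∈ Finset.univ.erase i0, P j :=
      (Finset.add_sum_erase _ _ (Finset.mem_univ i0)).symm
    rw [this]
    exact (hP i0).add_posSemidef hrest
  have hSi : (S⁻¹).PosDef := hS.inv
  have hSisymm : (S⁻¹)ᵀ = S⁻¹ := by
    have := hSi.isHermitian
    rwa [Matrix.IsHermitian, conjTranspose_eq_transpose_of_trivial] at this
  have hmul : S * S⁻¹ = 1 := mul_nonsing_inv _ hS.det_pos.ne'.isUnit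
  have hsym : ∀ i (y z : Fin n → ℝ), y ⬝ᵥ (P i) *ᵥ z = ((P i) *ᵥ y) ⬝ᵥ z := by
    intro i y z
    rw [dotProduct_mulVec, ← mulVec_transpose, hPsymm i]
  -- the key quadratic inequality
  have key : ∀ x : Fin N → (Fin n → ℝ),
      (∑ i, (P i).mulVec (x i)) ⬝ᵥ (S⁻¹).mulVec (∑ i, (P i).mulVec (x i)) ≤
        ∑ i, x i ⬝ᵥ (P i).mulVec (x i) := by
    intro x
    set v : Fin n → ℝ := ∑ i, (P i).mulVec (x i) with hv
    set w : Fin n → ℝ := S⁻¹ *ᵥ v with hw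
    have hSw : S *ᵥ w = v := by rw [hw, mulVec_mulVec, hmul, one_mulVec]
    have h0 : 0 ≤ ∑ i, (x i - w) ⬝ᵥ (P i) *ᵥ (x i - w) := by
      refine Finset.sum_nonneg fun i _ => ?_
      simpa using (hP i).posSemidef.dotProduct_mulVec_nonneg (x i - w)
    have e1 : ∀ i, (x i - w) ⬝ᵥ (P i) *ᵥ (x i - w)
        = x i ⬝ᵥ (P i) *ᵥ x i - ((P i) *ᵥ x i) ⬝ᵥ w - w ⬝ᵥ ((P i) *ᵥ x i)
          + w ⬝ᵥ (P i) *ᵥ w := by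
      intro i
      rw [mulVec_sub, dotProduct_sub, sub_dotProduct, sub_dotProduct, hsym i (x i) w]
      ring
    have hexp : ∑ i, (x i - w) ⬝ᵥ (P i) *ᵥ (x i - w)
        = (∑ i, x i ⬝ᵥ (P i) *ᵥ x i) - v ⬝ᵥ w := by
      simp_rw [e1]
      have hws : (∑ i, w ⬝ᵥ (P i) *ᵥ w) = w ⬝ᵥ v := by
        rw [← dot_sum_right, ← sum_mulVec', ← hSdef, hSw]
      have hvw : (∑ i, ((P i) *ᵥ x i) ⬝ᵥ w) = v ⬝ᵥ w := by
        rw [← dot_sum_left, ← hv]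
      have hwv : (∑ i, w ⬝ᵥ ((P i) *ᵥ x i)) = w ⬝ᵥ v := by
        rw [← dot_sum_right, ← hv]
      rw [Finset.sum_add_distrib, Finset.sum_sub_distrib, Finset.sum_sub_distrib,
        hws, hvw, hwv, dotProduct_comm w v]
      ring
    rw [hexp] at h0
    linarith
  refine ⟨key, ?_⟩
  -- block matrix part
  set D : Matrix (Fin N × Fin n) (Fin N × Fin n) ℝ :=
    Matrix.of (fun p q => if p.1 = q.1 then P p.1 p.2 q.2 else 0) with hD
  set C : Matrix (Fin n) (Fin N × Fin n) ℝ := Matrix.of (fun a p => P p.1 a p.2) with hC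
  have hMeq : (Matrix.of (fun p q : Fin N × Fin n =>
      (if p.1 = q.1 then P p.1 p.2 q.2 else 0)
        - (P p.1 * S⁻¹ * P q.1) p.2 q.2)) = D - Cᵀ * S⁻¹ * C := by
    ext p q
    have : (Cᵀ * S⁻¹ * C) p q = (P p.1 * S⁻¹ * P q.1) p.2 q.2 := by
      simp only [Matrix.mul_apply, Matrix.transpose_apply, hC, Matrix.of_apply]
      refine Finset.sum_congr rfl fun b _ => ?_
      congr 1
      refine Finset.sum_congr rfl fun a _ => ?_
      congr 1
      conv_rhs => rw [← hPsymm p.1]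
      rfl
    simp [hD, this]
  rw [hMeq]
  refine posSemidef_iff_dotProduct_mulVec.mpr ⟨?_, ?_⟩
  · -- Hermitian
    refine Matrix.IsHermitian.sub ?_ ?_
    · rw [Matrix.IsHermitian, conjTranspose_eq_transpose_of_trivial]
      ext p q
      simp only [Matrix.transpose_apply, hD, Matrix.of_apply]
      by_cases h : p.1 = q.1
      · rw [if_pos h.symm, if_pos h, h]
        conv_lhs => rw [← hPsymm q.1]
        rfl
      · rw [if_neg (fun hh => h hh.symm), if_neg h]
    · have := Matrix.isHermitian_conjTranspose_mul_mul C hSi.isHermitian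
      rwa [conjTranspose_eq_transpose_of_trivial] at this
  · -- nonnegativity of the quadratic form
    intro y
    have hCy : C *ᵥ y = ∑ i, (P i) *ᵥ (fun k => y (i, k)) := by
      ext a
      simp only [mulVec, dotProduct, hC, Matrix.of_apply, Finset.sum_apply,
        Fintype.sum_prod_type]
    have hDy : y ⬝ᵥ D *ᵥ y = ∑ i, (fun k => y (i, k)) ⬝ᵥ (P i) *ᵥ (fun k => y (i, k)) := by
      simp only [dotProduct, mulVec, hD, Matrix.of_apply, Fintype.sum_prod_type]
      refine Finset.sum_congr rfl fun i _ => Finset.sum_congr rfl fun k _ => ?_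
      congr 1
      rw [Finset.sum_comm]
      simp [ite_mul, Finset.sum_ite_eq]
    have hQ : y ⬝ᵥ (Cᵀ * S⁻¹ * C) *ᵥ y
        = (C *ᵥ y) ⬝ᵥ (S⁻¹) *ᵥ (C *ᵥ y) := by
      rw [← mulVec_mulVec, ← mulVec_mulVec, dotProduct_mulVec, vecMul_transpose]
    have := key (fun i => fun k => y (i, k))
    rw [← hCy, ← hDy] at this
    have hsub : (D - Cᵀ * S⁻¹ * C) *ᵥ y = D *ᵥ y - (Cᵀ * S⁻¹ * C) *ᵥ y := sub_mulVec _ _ _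
    rw [star_trivial, hsub, dotProduct_sub, hQ]
    linarith
end

section
/- Let {P_i}_{i=1}^N be the unique group of positive definite solutions to the HCREs, define P̄_i = (∑_{j=1}^N l_{ij} (P_j^{-1} + C_jᵀ R_j^{-1} C_j))^{-1}, and let 𝒜 be the nN×nN block matrix whose (i,j) block is l_{ij} A P̄_i P_j^{-1}. Then 𝒜 is Schur stable, i.e. the spectral radius of 𝒜 is strictly less than 1. -/
open Matrix

set_option linter.unusedSectionVars false
set_option linter.unnecessarySimpa false
set_option maxHeartbeats 1000000

section helpers
variable {κ ι : Type*} [Fintype κ] [DecidableEq κ] [Fintype ι]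

lemma quad_pos {M : Matrix κ κ ℝ} (hM : M.PosDef) {x : κ → ℝ} (hx : x ≠ 0) :
    0 < x ⬝ᵥ M *ᵥ x := by
  have := hM.dotProduct_mulVec_pos hx; simpa using this

lemma quad_nonneg {M : Matrix κ κ ℝ} (hM : M.PosSemidef) (x : κ → ℝ) :
    0 ≤ x ⬝ᵥ M *ᵥ x := by
  have := hM.dotProduct_mulVec_nonneg x; simpa using this

lemma dot_symm {M : Matrix κ κ ℝ} (h : Mᵀ = M) (y z : κ → ℝ) :
    y ⬝ᵥ M *ᵥ z = z ⬝ᵥ M *ᵥ y := by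
  rw [dotProduct_mulVec, ← mulVec_transpose, h, dotProduct_comm]

lemma symm_of_herm {M : Matrix κ κ ℝ} (hM : M.IsHermitian) : Mᵀ = M := by
  rw [Matrix.IsHermitian, conjTranspose_eq_transpose_of_trivial] at hM
  exact hM

lemma pd_mulVec_inv_cancel {M : Matrix κ κ ℝ} (hM : M.PosDef) (f : κ → ℝ) :
    M *ᵥ (M⁻¹ *ᵥ f) = f := by
  rw [mulVec_mulVec, Matrix.mul_nonsing_inv _ hM.det_pos.ne'.isUnit, one_mulVec]

lemma two_dot_le {M : Matrix κ κ ℝ} (hM : M.PosSemidef) (a b : κ → ℝ) :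
    2 * (b ⬝ᵥ M *ᵥ a) ≤ a ⬝ᵥ M *ᵥ a + b ⬝ᵥ M *ᵥ b := by
  have hs : Mᵀ = M := symm_of_herm hM.1
  have h0 := quad_nonneg hM (a - b)
  rw [mulVec_sub, dotProduct_sub, sub_dotProduct, sub_dotProduct] at h0
  have hab : a ⬝ᵥ M *ᵥ b = b ⬝ᵥ M *ᵥ a := dot_symm hs a b
  linarith

lemma two_dot_sub_quad_le {M : Matrix κ κ ℝ} (hM : M.PosDef) (z u : κ → ℝ) :
    2 * (z ⬝ᵥ u) - z ⬝ᵥ M *ᵥ z ≤ u ⬝ᵥ M⁻¹ *ᵥ u := by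
  have hs : Mᵀ = M := symm_of_herm hM.1
  set y := M⁻¹ *ᵥ u with hy
  have hMy : M *ᵥ y = u := pd_mulVec_inv_cancel hM u
  have h0 := quad_nonneg hM.posSemidef (z - y)
  rw [mulVec_sub, dotProduct_sub, sub_dotProduct, sub_dotProduct] at h0
  have h1 : z ⬝ᵥ M *ᵥ y = z ⬝ᵥ u := by rw [hMy]
  have h2 : y ⬝ᵥ M *ᵥ z = z ⬝ᵥ u := by rw [dot_symm hs, hMy]
  have h3 : y ⬝ᵥ M *ᵥ y = u ⬝ᵥ M⁻¹ *ᵥ u := by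
    rw [hMy, dotProduct_comm]
  linarith

lemma inv_quad_eq {M : Matrix κ κ ℝ} (hM : M.PosDef) (u : κ → ℝ) :
    u ⬝ᵥ M⁻¹ *ᵥ u
      = 2 * ((M⁻¹ *ᵥ u) ⬝ᵥ u) - (M⁻¹ *ᵥ u) ⬝ᵥ M *ᵥ (M⁻¹ *ᵥ u) := by
  have hMy : M *ᵥ (M⁻¹ *ᵥ u) = u := pd_mulVec_inv_cancel hM u
  rw [hMy, dotProduct_comm]
  ring

lemma sum_smul_mulVec (s : Finset ι) (c : ι → ℝ) (M : ι → Matrix κ κ ℝ) (x : κ → ℝ) :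
    (∑ j ∈ s, c j • M j) *ᵥ x = ∑ j ∈ s, c j • (M j *ᵥ x) := by
  classical
  induction s using Finset.induction_on with
  | empty => simp [Matrix.zero_mulVec]
  | insert _ _ h ih => simp [Finset.sum_insert h, add_mulVec, smul_mulVec, ih]

lemma mulVec_sum' (M : Matrix κ κ ℝ) (s : Finset ι) (v : ι → κ → ℝ) :
    M *ᵥ (∑ j ∈ s, v j) = ∑ j ∈ s, M *ᵥ v j := by
  classical
  induction s using Finset.induction_on with
  | empty => simp [Matrix.mulVec_zero]
  | insert _ _ h ih => simp [Finset.sum_insert h, mulVec_add, ih]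

lemma dotProduct_sum' (x : κ → ℝ) (s : Finset ι) (v : ι → κ → ℝ) :
    x ⬝ᵥ (∑ j ∈ s, v j) = ∑ j ∈ s, x ⬝ᵥ v j := by
  classical
  induction s using Finset.induction_on with
  | empty => simp
  | insert _ _ h ih => simp [Finset.sum_insert h, dotProduct_add, ih]

lemma dotProduct_smul' (c : ℝ) (x v : κ → ℝ) : x ⬝ᵥ (c • v) = c * (x ⬝ᵥ v) := by
  rw [dotProduct_smul]; simp

/-- The key per-agent quadratic chain inequality. -/
lemma chain_ineq
    (Lr : ι → ℝ) (hL0 : ∀ j, 0 ≤ Lr j)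
    (Pinv : ι → Matrix κ κ ℝ) (hPinv : ∀ j, (Pinv j).PosDef)
    (Pi_ : Matrix κ κ ℝ) (hPi : Pi_.PosDef)
    (T : Matrix κ κ ℝ) (hT : T.PosSemidef)
    (hSpd : (∑ j, Lr j • Pinv j).PosDef)
    (Pb A Q : Matrix κ κ ℝ)
    (hPb : Pb = ((∑ j, Lr j • Pinv j) + T)⁻¹)
    (hP : Pi_ = A * Pb * Aᵀ + Q)
    (e : ι → κ → ℝ) (u f y : κ → ℝ)
    (hu : u = ∑ j, Lr j • (Pinv j *ᵥ e j))
    (hf : f = (A * Pb) *ᵥ u)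
    (hy : y = Pi_⁻¹ *ᵥ f) :
    f ⬝ᵥ Pi_⁻¹ *ᵥ f + y ⬝ᵥ Q *ᵥ y ≤ ∑ j, Lr j * (e j ⬝ᵥ Pinv j *ᵥ e j) := by
  set S : Matrix κ κ ℝ := ∑ j, Lr j • Pinv j with hSdef
  have hSTpd : (S + T).PosDef := hSpd.add_posSemidef hT
  have hPbpd : Pb.PosDef := hPb ▸ hSTpd.inv
  set w : κ → ℝ := Aᵀ *ᵥ y with hw
  -- Step A
  have eA : f ⬝ᵥ Pi_⁻¹ *ᵥ f = 2 * (y ⬝ᵥ f) - y ⬝ᵥ Pi_ *ᵥ y := by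
    rw [hy]; exact inv_quad_eq hPi f
  have eB : y ⬝ᵥ Pi_ *ᵥ y = w ⬝ᵥ Pb *ᵥ w + y ⬝ᵥ Q *ᵥ y := by
    rw [hP, add_mulVec, dotProduct_add]
    congr 1
    rw [show (A * Pb * Aᵀ) *ᵥ y = A *ᵥ (Pb *ᵥ (Aᵀ *ᵥ y)) by
        rw [mulVec_mulVec, mulVec_mulVec],
      dotProduct_mulVec y A, ← mulVec_transpose]
  have eC : y ⬝ᵥ f = w ⬝ᵥ (Pb *ᵥ u) := by
    rw [hf, show (A * Pb) *ᵥ u = A *ᵥ (Pb *ᵥ u) by rw [mulVec_mulVec],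
      dotProduct_mulVec y A, ← mulVec_transpose]
  have eD : 2 * (w ⬝ᵥ Pb *ᵥ u) ≤ u ⬝ᵥ Pb *ᵥ u + w ⬝ᵥ Pb *ᵥ w :=
    two_dot_le hPbpd.posSemidef u w
  have stepA : f ⬝ᵥ Pi_⁻¹ *ᵥ f + y ⬝ᵥ Q *ᵥ y ≤ u ⬝ᵥ Pb *ᵥ u := by
    rw [eA, eB, eC]; linarith
  -- Step E
  have stepE : u ⬝ᵥ Pb *ᵥ u ≤ u ⬝ᵥ S⁻¹ *ᵥ u := by
    set z : κ → ℝ := (S + T)⁻¹ *ᵥ u with hz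
    have e1 : u ⬝ᵥ Pb *ᵥ u = 2 * (z ⬝ᵥ u) - z ⬝ᵥ (S + T) *ᵥ z := by
      rw [hPb]; exact inv_quad_eq hSTpd u
    have e2 : z ⬝ᵥ (S + T) *ᵥ z = z ⬝ᵥ S *ᵥ z + z ⬝ᵥ T *ᵥ z := by
      rw [add_mulVec, dotProduct_add]
    have e3 : 0 ≤ z ⬝ᵥ T *ᵥ z := quad_nonneg hT z
    have e4 : 2 * (z ⬝ᵥ u) - z ⬝ᵥ S *ᵥ z ≤ u ⬝ᵥ S⁻¹ *ᵥ u :=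
      two_dot_sub_quad_le hSpd z u
    linarith
  -- Step J
  have stepJ : u ⬝ᵥ S⁻¹ *ᵥ u ≤ ∑ j, Lr j * (e j ⬝ᵥ Pinv j *ᵥ e j) := by
    set z : κ → ℝ := S⁻¹ *ᵥ u with hz
    have e1 : u ⬝ᵥ S⁻¹ *ᵥ u = 2 * (z ⬝ᵥ u) - z ⬝ᵥ S *ᵥ z := inv_quad_eq hSpd u
    have h1 : z ⬝ᵥ u = ∑ j, Lr j * (z ⬝ᵥ (Pinv j *ᵥ e j)) := by
      rw [hu, dotProduct_sum']
      exact Finset.sum_congr rfl fun j _ => dotProduct_smul' _ _ _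
    have h2 : z ⬝ᵥ S *ᵥ z = ∑ j, Lr j * (z ⬝ᵥ (Pinv j *ᵥ z)) := by
      rw [hSdef, sum_smul_mulVec, dotProduct_sum']
      exact Finset.sum_congr rfl fun j _ => dotProduct_smul' _ _ _
    have e2 : u ⬝ᵥ S⁻¹ *ᵥ u
        = ∑ j, Lr j * (2 * (z ⬝ᵥ (Pinv j *ᵥ e j)) - z ⬝ᵥ (Pinv j *ᵥ z)) := by
      rw [e1, h1, h2, Finset.mul_sum, ← Finset.sum_sub_distrib]
      exact Finset.sum_congr rfl fun j _ => by ring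
    rw [e2]
    refine Finset.sum_le_sum fun j _ => ?_
    refine mul_le_mul_of_nonneg_left ?_ (hL0 j)
    have := two_dot_le (hPinv j).posSemidef (e j) z
    linarith

  linarith

lemma herm_smul {M : Matrix κ κ ℝ} (hM : M.IsHermitian) (c : ℝ) :
    (c • M).IsHermitian := by
  rw [Matrix.IsHermitian, conjTranspose_smul, hM.eq]
  simp

lemma psd_smul {M : Matrix κ κ ℝ} (hM : M.PosSemidef) {c : ℝ} (hc : 0 ≤ c) :
    (c • M).PosSemidef := by
  refine Matrix.PosSemidef.of_dotProduct_mulVec_nonneg (herm_smul hM.1 c) fun x => ?_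
  rw [smul_mulVec, dotProduct_smul, smul_eq_mul]
  exact mul_nonneg hc (hM.dotProduct_mulVec_nonneg x)

end helpers

/-- Existence of a positive left eigenvector for eigenvalue 1 of a primitive
row-stochastic matrix. -/
lemma exists_positive_left_eigenvector {N : ℕ} (hN : 0 < N)
    (L : Matrix (Fin N) (Fin N) ℝ)
    (hLnonneg : ∀ i j, 0 ≤ L i j) (hLrow : ∀ i, ∑ j, L i j = 1)
    (hLprim : ∃ k : ℕ, 0 < k ∧ ∀ i j, 0 < (L ^ k) i j) :
    ∃ π : Fin N → ℝ, (∀ j, 0 < π j) ∧ ∀ j, ∑ i, π i * L i j = π j := by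
  obtain ⟨k, hk, hkpos⟩ := hLprim
  -- powers are entrywise nonneg with row sums one
  have hpow0 : ∀ t : ℕ, ∀ i j, 0 ≤ (L ^ t) i j := by
    intro t
    induction t with
    | zero => intro i j; by_cases h : i = j <;> simp [pow_zero, Matrix.one_apply, h]
    | succ t ih =>
        intro i j
        rw [pow_succ, Matrix.mul_apply]
        exact Finset.sum_nonneg fun l _ => mul_nonneg (ih i l) (hLnonneg l j)
  have hpowrow : ∀ t : ℕ, ∀ i, ∑ j, (L ^ t) i j = 1 := by
    intro t
    induction t with
    | zero => intro i; simp [pow_zero, Matrix.one_apply]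
    | succ t ih =>
        intro i
        have : ∑ j, (L ^ (t+1)) i j = ∑ j, ∑ l, (L ^ t) i l * L l j := by
          refine Finset.sum_congr rfl fun j _ => ?_
          rw [pow_succ, Matrix.mul_apply]
        rw [this, Finset.sum_comm]
        have : ∀ l, ∑ j, (L ^ t) i l * L l j = (L ^ t) i l := by
          intro l; rw [← Finset.mul_sum, hLrow l, mul_one]
        rw [Finset.sum_congr rfl fun l _ => this l, ih i]
  -- a (possibly sign-mixed) left eigenvector
  have hone : (L - 1) *ᵥ (fun _ => (1:ℝ)) = 0 := by
    funext i
    simp only [sub_mulVec, Pi.sub_apply, Pi.zero_apply]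
    rw [one_mulVec]
    simp [mulVec, dotProduct, hLrow i]
  have hdet : (L - 1).det = 0 := by
    rw [← Matrix.exists_mulVec_eq_zero_iff]
    refine ⟨fun _ => 1, ?_, hone⟩
    intro h
    have := congrFun h ⟨0, hN⟩
    simpa using this
  have hdetT : ((L - 1)ᵀ).det = 0 := by rw [Matrix.det_transpose]; exact hdet
  obtain ⟨v, hv0, hv⟩ := Matrix.exists_mulVec_eq_zero_iff.mpr hdetT
  have hvL : Lᵀ *ᵥ v = v := by
    have : (Lᵀ - 1) *ᵥ v = 0 := by rwa [Matrix.transpose_sub, Matrix.transpose_one] at hv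
    rw [sub_mulVec, one_mulVec, sub_eq_zero] at this
    exact this
  -- iterate
  have hvK : ∀ t : ℕ, (Lᵀ) ^ t *ᵥ v = v := by
    intro t
    induction t with
    | zero => simp [pow_zero, one_mulVec]
    | succ t ih => rw [pow_succ', ← mulVec_mulVec, ih, hvL]
  have hvk : ∀ j, ∑ i, (L ^ k) i j * v i = v j := by
    intro j
    have h := congrFun (hvK k) j
    rw [← Matrix.transpose_pow] at h
    simpa [mulVec, dotProduct] using h
  -- absolute value vector
  set w : Fin N → ℝ := fun i => |v i| with hwdef
  have hwle : ∀ j, w j ≤ ∑ i, w i * (L ^ k) i j := by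
    intro j
    calc w j = |∑ i, (L ^ k) i j * v i| := by rw [hvk j]
    _ ≤ ∑ i, |(L ^ k) i j * v i| := Finset.abs_sum_le_sum_abs _ _
    _ = ∑ i, w i * (L ^ k) i j := by
        refine Finset.sum_congr rfl fun i _ => ?_
        rw [abs_mul, abs_of_nonneg (hpow0 k i j), mul_comm]
  have hsum0 : ∑ j, ((∑ i, w i * (L ^ k) i j) - w j) = 0 := by
    rw [Finset.sum_sub_distrib, Finset.sum_comm]
    have : ∀ i, ∑ j, w i * (L ^ k) i j = w i := by
      intro i; rw [← Finset.mul_sum, hpowrow k i, mul_one]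
    rw [Finset.sum_congr rfl fun i _ => this i, sub_self]
  have hweq : ∀ j, ∑ i, w i * (L ^ k) i j = w j := by
    intro j
    have h := (Finset.sum_eq_zero_iff_of_nonneg (fun j _ => sub_nonneg.mpr (hwle j))).mp
      hsum0 j (Finset.mem_univ j)
    linarith [h]
  have hwex : ∃ i, 0 < w i := by
    by_contra h
    push_neg at h
    apply hv0
    funext i
    have h1 : w i ≤ 0 := h i
    have h2 : 0 ≤ w i := abs_nonneg _
    have : |v i| = 0 := le_antisymm h1 h2
    simpa using this
  obtain ⟨i0, hi0⟩ := hwex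
  have hwpos : ∀ j, 0 < w j := by
    intro j
    have hterm : w i0 * (L ^ k) i0 j ≤ ∑ i, w i * (L ^ k) i j :=
      Finset.single_le_sum (f := fun i => w i * (L ^ k) i j)
        (fun i _ => mul_nonneg (abs_nonneg _) (hpow0 k i j)) (Finset.mem_univ i0)
    have hpos : 0 < w i0 * (L ^ k) i0 j := mul_pos hi0 (hkpos i0 j)
    rw [hweq j] at hterm
    linarith
  -- the Perron vector
  refine ⟨fun j => ∑ t ∈ Finset.range k, ∑ i, w i * (L ^ t) i j, ?_, ?_⟩
  · intro j
    refine Finset.sum_pos' (fun t _ => Finset.sum_nonneg fun i _ =>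
      mul_nonneg (abs_nonneg _) (hpow0 t i j)) ?_
    refine ⟨0, Finset.mem_range.mpr hk, ?_⟩
    have h0 : ∑ i, w i * (L ^ 0) i j = w j := by
      simp [pow_zero, Matrix.one_apply, mul_ite]
    rw [h0]
    exact hwpos j
  · intro j
    have hinner : ∀ t : ℕ, ∑ i, (∑ r, w r * (L ^ t) r i) * L i j
        = ∑ r, w r * (L ^ (t+1)) r j := by
      intro t
      calc ∑ i, (∑ r, w r * (L ^ t) r i) * L i j
          = ∑ i, ∑ r, w r * ((L ^ t) r i * L i j) := by
            refine Finset.sum_congr rfl fun i _ => ?_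
            rw [Finset.sum_mul]
            exact Finset.sum_congr rfl fun r _ => by ring
        _ = ∑ r, ∑ i, w r * ((L ^ t) r i * L i j) := Finset.sum_comm
        _ = ∑ r, w r * (L ^ (t+1)) r j := by
            refine Finset.sum_congr rfl fun r _ => ?_
            rw [← Finset.mul_sum, pow_succ, Matrix.mul_apply]
    calc ∑ i, (∑ t ∈ Finset.range k, ∑ r, w r * (L ^ t) r i) * L i j
        = ∑ i, ∑ t ∈ Finset.range k, (∑ r, w r * (L ^ t) r i) * L i j := by
          exact Finset.sum_congr rfl fun i _ => Finset.sum_mul _ _ _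
      _ = ∑ t ∈ Finset.range k, ∑ i, (∑ r, w r * (L ^ t) r i) * L i j :=
          Finset.sum_comm
      _ = ∑ t ∈ Finset.range k, ∑ r, w r * (L ^ (t+1)) r j :=
          Finset.sum_congr rfl fun t _ => hinner t
      _ = ∑ t ∈ Finset.range k, ∑ r, w r * (L ^ t) r j := by
          set G : ℕ → ℝ := fun t => ∑ r, w r * (L ^ t) r j with hG
          have hG0 : G 0 = w j := by
            simp [hG, pow_zero, Matrix.one_apply, mul_ite]
          have hGk : G k = w j := hweq j
          have h1 := Finset.sum_range_succ' G k
          have h2 := Finset.sum_range_succ G k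
          have h3 : G k = G 0 := by rw [hGk, hG0]
          show ∑ t ∈ Finset.range k, G (t+1) = ∑ t ∈ Finset.range k, G t
          linarith

section schur
variable {κ : Type*} [Fintype κ] [DecidableEq κ]

lemma re_quad (D : Matrix κ κ ℝ) (w : κ → ℂ) :
    (star w ⬝ᵥ (D.map Complex.ofReal) *ᵥ w).re
      = (fun k => (w k).re) ⬝ᵥ D *ᵥ (fun k => (w k).re)
        + (fun k => (w k).im) ⬝ᵥ D *ᵥ (fun k => (w k).im) := by
  have hterm : ∀ (z y : ℂ) (d : ℝ),
      ((starRingEnd ℂ) z * ((d : ℂ) * y)).re = d * (z.re * y.re + z.im * y.im) := by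
    intro z y d
    simp [Complex.mul_re, Complex.mul_im]
    ring
  calc (star w ⬝ᵥ (D.map Complex.ofReal) *ᵥ w).re
      = ∑ k, ∑ l, ((starRingEnd ℂ) (w k) * ((D k l : ℂ) * w l)).re := by
        simp only [dotProduct, mulVec, Matrix.map_apply, Pi.star_apply,
          Complex.star_def, Finset.mul_sum, Complex.re_sum]
    _ = ∑ k, ∑ l, D k l * ((w k).re * (w l).re + (w k).im * (w l).im) := by
        exact Finset.sum_congr rfl fun k _ => Finset.sum_congr rfl fun l _ => hterm _ _ _
    _ = _ := by
        simp only [dotProduct, mulVec]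
        rw [← Finset.sum_add_distrib]
        refine Finset.sum_congr rfl fun k _ => ?_
        rw [Finset.mul_sum, Finset.mul_sum, ← Finset.sum_add_distrib]
        refine Finset.sum_congr rfl fun l _ => by ring

lemma mulVec_map_re (M : Matrix κ κ ℝ) (w : κ → ℂ) :
    (fun k => (((M.map Complex.ofReal) *ᵥ w) k).re) = M *ᵥ (fun k => (w k).re) := by
  funext k
  simp [mulVec, dotProduct, Complex.re_sum, Complex.mul_re]

lemma mulVec_map_im (M : Matrix κ κ ℝ) (w : κ → ℂ) :
    (fun k => (((M.map Complex.ofReal) *ᵥ w) k).im) = M *ᵥ (fun k => (w k).im) := by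
  funext k
  simp [mulVec, dotProduct, Complex.im_sum, Complex.mul_im]

/-- A real matrix admitting a strict quadratic Lyapunov function is Schur stable. -/
lemma schur_of_lyap (M D : Matrix κ κ ℝ)
    (hD : ∀ x : κ → ℝ, x ≠ 0 → 0 < x ⬝ᵥ D *ᵥ x)
    (hLyap : ∀ x : κ → ℝ, x ≠ 0 → (M *ᵥ x) ⬝ᵥ D *ᵥ (M *ᵥ x) < x ⬝ᵥ D *ᵥ x) :
    ∀ μ ∈ spectrum ℂ (M.map Complex.ofReal), ‖μ‖ < 1 := by
  have hD' : ∀ x : κ → ℝ, 0 ≤ x ⬝ᵥ D *ᵥ x := by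
    intro x
    by_cases hx : x = 0
    · subst hx; simp
    · exact (hD x hx).le
  have hLyap' : ∀ x : κ → ℝ, (M *ᵥ x) ⬝ᵥ D *ᵥ (M *ᵥ x) ≤ x ⬝ᵥ D *ᵥ x := by
    intro x
    by_cases hx : x = 0
    · subst hx; simp
    · exact (hLyap x hx).le
  intro μ hμ
  rw [spectrum.mem_iff, Matrix.isUnit_iff_isUnit_det] at hμ
  have hdet : ((algebraMap ℂ (Matrix κ κ ℂ)) μ - M.map Complex.ofReal).det = 0 := by
    by_contra h
    exact hμ (Ne.isUnit h)
  obtain ⟨v, hv0, hv⟩ := Matrix.exists_mulVec_eq_zero_iff.mpr hdet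
  have heig : (M.map Complex.ofReal) *ᵥ v = μ • v := by
    have h1 : (algebraMap ℂ (Matrix κ κ ℂ)) μ *ᵥ v - (M.map Complex.ofReal) *ᵥ v = 0 := by
      rw [← sub_mulVec]; exact hv
    have h2 : (algebraMap ℂ (Matrix κ κ ℂ)) μ *ᵥ v = μ • v := by
      rw [Algebra.algebraMap_eq_smul_one, smul_mulVec, one_mulVec]
    rw [h2] at h1
    rw [sub_eq_zero] at h1
    exact h1.symm
  set a : κ → ℝ := fun k => (v k).re with ha
  set b : κ → ℝ := fun k => (v k).im with hb
  have hq : (star v ⬝ᵥ (D.map Complex.ofReal) *ᵥ v).re = a ⬝ᵥ D *ᵥ a + b ⬝ᵥ D *ᵥ b :=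
    re_quad D v
  -- quadratic form at the image vector
  have hqM : (star ((M.map Complex.ofReal) *ᵥ v)
        ⬝ᵥ (D.map Complex.ofReal) *ᵥ ((M.map Complex.ofReal) *ᵥ v)).re
      = (M *ᵥ a) ⬝ᵥ D *ᵥ (M *ᵥ a) + (M *ᵥ b) ⬝ᵥ D *ᵥ (M *ᵥ b) := by
    rw [re_quad D ((M.map Complex.ofReal) *ᵥ v), mulVec_map_re, mulVec_map_im]
  -- the image vector is μ • v
  have hsmul : (star (μ • v) ⬝ᵥ (D.map Complex.ofReal) *ᵥ (μ • v)).re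
      = Complex.normSq μ * (star v ⬝ᵥ (D.map Complex.ofReal) *ᵥ v).re := by
    rw [star_smul, smul_dotProduct, mulVec_smul, dotProduct_smul]
    have : star μ • μ • (star v ⬝ᵥ (D.map Complex.ofReal) *ᵥ v)
        = ((Complex.normSq μ : ℝ) : ℂ) * (star v ⬝ᵥ (D.map Complex.ofReal) *ᵥ v) := by
      rw [smul_eq_mul, smul_eq_mul, ← mul_assoc]
      congr 1
      rw [Complex.star_def, mul_comm, Complex.mul_conj]
    rw [this]
    simp [Complex.mul_re]
  have hkey : Complex.normSq μ * (a ⬝ᵥ D *ᵥ a + b ⬝ᵥ D *ᵥ b)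
      = (M *ᵥ a) ⬝ᵥ D *ᵥ (M *ᵥ a) + (M *ᵥ b) ⬝ᵥ D *ᵥ (M *ᵥ b) := by
    rw [← hq, ← hsmul, ← heig, hqM]
  have hab : a ≠ 0 ∨ b ≠ 0 := by
    by_contra h
    push_neg at h
    apply hv0
    funext k
    have h1 : (v k).re = 0 := congrFun h.1 k
    have h2 : (v k).im = 0 := congrFun h.2 k
    exact Complex.ext h1 h2
  have hpos : 0 < a ⬝ᵥ D *ᵥ a + b ⬝ᵥ D *ᵥ b := by
    rcases hab with h | h
    · have := hD a h; have := hD' b; linarith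
    · have := hD b h; have := hD' a; linarith
  have hlt : (M *ᵥ a) ⬝ᵥ D *ᵥ (M *ᵥ a) + (M *ᵥ b) ⬝ᵥ D *ᵥ (M *ᵥ b)
      < a ⬝ᵥ D *ᵥ a + b ⬝ᵥ D *ᵥ b := by
    rcases hab with h | h
    · have := hLyap a h; have := hLyap' b; linarith
    · have := hLyap b h; have := hLyap' a; linarith
  have hn : Complex.normSq μ < 1 := by
    have := hkey ▸ hlt
    exact (mul_lt_iff_lt_one_left hpos).mp this
  have habs : ‖μ‖ ^ 2 < 1 := by
    rw [Complex.sq_norm]; exact hn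
  nlinarith [norm_nonneg μ]

end schur

/-- For the unique positive definite solutions of the HCREs, the
steady-state block matrix `𝒜` with `(i,j)` block `l_{ij} A P̄_i P_j⁻¹` is Schur stable:
every complex eigenvalue of `𝒜` has modulus strictly less than 1. -/
theorem hcre_steady_state_matrix_schur_stable
    (n N : ℕ) (hn : 0 < n) (hN : 0 < N)
    (m : Fin N → ℕ) (hm : ∀ i, 0 < m i)
    (A : Matrix (Fin n) (Fin n) ℝ) (hA : IsUnit A.det)
    (C : ∀ i : Fin N, Matrix (Fin (m i)) (Fin n) ℝ)
    (hObs : (∑ k ∈ Finset.range n, (A ^ k)ᵀ * (∑ i, (C i)ᵀ * C i) * A ^ k).PosDef)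
    (Q : Matrix (Fin n) (Fin n) ℝ) (hQ : Q.PosDef)
    (R : ∀ i : Fin N, Matrix (Fin (m i)) (Fin (m i)) ℝ) (hR : ∀ i, (R i).PosDef)
    (L : Matrix (Fin N) (Fin N) ℝ)
    (hLnonneg : ∀ i j, 0 ≤ L i j) (hLrow : ∀ i, ∑ j, L i j = 1)
    (hLprim : ∃ k : ℕ, 0 < k ∧ ∀ i j, 0 < (L ^ k) i j)
    (P : Fin N → Matrix (Fin n) (Fin n) ℝ) (hPpos : ∀ i, (P i).PosDef)
    (hsol : ∀ i, P i =
      A * (∑ j, (L i j • (P j)⁻¹ + L i j • ((C j)ᵀ * (R j)⁻¹ * C j)))⁻¹ * Aᵀ + Q)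
    (Pbar : Fin N → Matrix (Fin n) (Fin n) ℝ)
    (hPbar : ∀ i, Pbar i = (∑ j, L i j • ((P j)⁻¹ + (C j)ᵀ * (R j)⁻¹ * C j))⁻¹)
    (Acal : Matrix (Fin N × Fin n) (Fin N × Fin n) ℝ)
    (hAcal : ∀ p q : Fin N × Fin n,
      Acal p q = L p.1 q.1 * ((A * Pbar p.1 * (P q.1)⁻¹) p.2 q.2)) :
    ∀ μ ∈ spectrum ℂ (Acal.map Complex.ofReal), ‖μ‖ < 1 := by
  classical
  have hPinv : ∀ j, ((P j)⁻¹).PosDef := fun j => (hPpos j).inv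
  -- each row of L has a positive entry
  have hrowpos : ∀ i, ∃ j, 0 < L i j := by
    intro i
    by_contra h
    push_neg at h
    have h0 : ∑ j, L i j = 0 :=
      Finset.sum_eq_zero fun j _ => le_antisymm (h j) (hLnonneg i j)
    rw [hLrow i] at h0
    norm_num at h0
  -- `S i` is positive definite
  have hSipd : ∀ i, (∑ j, L i j • (P j)⁻¹).PosDef := by
    intro i
    refine Matrix.PosDef.of_dotProduct_mulVec_pos ?_ ?_
    · exact Finset.sum_induction _ _ (fun a b ha hb => ha.add hb) isHermitian_zero
        (fun j _ => herm_smul (hPinv j).1 _)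
    · intro x hx
      have hq : star x ⬝ᵥ (∑ j, L i j • (P j)⁻¹) *ᵥ x
          = ∑ j, L i j * (x ⬝ᵥ ((P j)⁻¹ *ᵥ x)) := by
        simp only [star_trivial]
        rw [sum_smul_mulVec, dotProduct_sum']
        exact Finset.sum_congr rfl fun j _ => dotProduct_smul' _ _ _
      rw [hq]
      obtain ⟨j0, hj0⟩ := hrowpos i
      exact Finset.sum_pos' (fun j _ => mul_nonneg (hLnonneg i j)
        (quad_nonneg (hPinv j).posSemidef x)) ⟨j0, Finset.mem_univ j0,
        mul_pos hj0 (quad_pos (hPinv j0) hx)⟩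
  -- `T i` is positive semidefinite
  have hTipsd : ∀ i, (∑ j, L i j • ((C j)ᵀ * (R j)⁻¹ * C j)).PosSemidef := by
    intro i
    refine Finset.sum_induction _ _ (fun a b ha hb => ha.add hb) PosSemidef.zero ?_
    intro j _
    have h1 := (hR j).inv.posSemidef.conjTranspose_mul_mul_same (C j)
    rw [conjTranspose_eq_transpose_of_trivial] at h1
    exact psd_smul h1 (hLnonneg i j)
  -- rewrite `Pbar`
  have hPbar' : ∀ i, Pbar i
      = ((∑ j, L i j • (P j)⁻¹) + ∑ j, L i j • ((C j)ᵀ * (R j)⁻¹ * C j))⁻¹ := by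
    intro i
    rw [hPbar i, ← Finset.sum_add_distrib]
    congr 1
    exact Finset.sum_congr rfl fun j _ => smul_add _ _ _
  have hsol' : ∀ i, P i = A * Pbar i * Aᵀ + Q := by
    intro i
    have hsum : (∑ j, (L i j • (P j)⁻¹ + L i j • ((C j)ᵀ * (R j)⁻¹ * C j)))
        = (∑ j, L i j • (P j)⁻¹) + ∑ j, L i j • ((C j)ᵀ * (R j)⁻¹ * C j) :=
      Finset.sum_add_distrib
    rw [hsol i, hsum, ← hPbar' i]
  -- Perron vector
  obtain ⟨π, hπpos, hπeig⟩ :=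
    exists_positive_left_eigenvector hN L hLnonneg hLrow hLprim
  -- block diagonal Lyapunov matrix
  set D : Matrix (Fin N × Fin n) (Fin N × Fin n) ℝ :=
    Matrix.of (fun p q => if p.1 = q.1 then π p.1 * ((P p.1)⁻¹ p.2 q.2) else 0)
    with hDdef
  have hDx : ∀ (z : Fin N × Fin n → ℝ) (i : Fin N) (p : Fin n),
      (D *ᵥ z) (i, p) = π i * (((P i)⁻¹ *ᵥ (fun q => z (i, q))) p) := by
    intro z i p
    have h1 : (D *ᵥ z) (i, p) = ∑ jq : Fin N × Fin n, D (i, p) jq * z jq := rfl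
    rw [h1, Fintype.sum_prod_type]
    have h2 : ∀ j : Fin N, ∑ q, D (i, p) (j, q) * z (j, q)
        = if i = j then ∑ q, π i * ((P i)⁻¹ p q * z (j, q)) else 0 := by
      intro j
      by_cases h : i = j
      · subst h
        simp only [hDdef, Matrix.of_apply, if_pos rfl, if_pos]
        exact Finset.sum_congr rfl fun q _ => by ring
      · simp [hDdef, h]
    rw [Finset.sum_congr rfl fun j _ => h2 j, Finset.sum_ite_eq]
    simp only [Finset.mem_univ, if_pos]
    rw [← Finset.mul_sum]
    rfl
  have quadD : ∀ z : Fin N × Fin n → ℝ,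
      z ⬝ᵥ D *ᵥ z
        = ∑ i, π i * ((fun p => z (i, p)) ⬝ᵥ (P i)⁻¹ *ᵥ (fun p => z (i, p))) := by
    intro z
    have h1 : z ⬝ᵥ D *ᵥ z = ∑ jq : Fin N × Fin n, z jq * (D *ᵥ z) jq := rfl
    rw [h1, Fintype.sum_prod_type]
    refine Finset.sum_congr rfl fun i _ => ?_
    have h2 : ∀ p, z (i, p) * (D *ᵥ z) (i, p)
        = π i * (z (i, p) * (((P i)⁻¹ *ᵥ (fun q => z (i, q))) p)) := by
      intro p
      rw [hDx z i p]
      ring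
    rw [Finset.sum_congr rfl fun p _ => h2 p, ← Finset.mul_sum]
    rfl
  -- positivity of the Lyapunov form
  have hDpos : ∀ x : Fin N × Fin n → ℝ, x ≠ 0 → 0 < x ⬝ᵥ D *ᵥ x := by
    intro x hx
    rw [quadD]
    obtain ⟨pq, hpq⟩ := Function.ne_iff.mp hx
    refine Finset.sum_pos' (fun i _ => mul_nonneg (hπpos i).le
      (quad_nonneg (hPinv i).posSemidef _)) ⟨pq.1, Finset.mem_univ _, ?_⟩
    refine mul_pos (hπpos pq.1) (quad_pos (hPinv pq.1) ?_)
    intro h0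
    apply hpq
    have := congrFun h0 pq.2
    simpa using this
  -- blocks of `Acal *ᵥ x`
  have hfeq : ∀ (x : Fin N × Fin n → ℝ) (i : Fin N),
      (fun p => (Acal *ᵥ x) (i, p))
        = (A * Pbar i) *ᵥ (∑ j, L i j • ((P j)⁻¹ *ᵥ (fun p => x (j, p)))) := by
    intro x i
    funext p
    have h1 : (Acal *ᵥ x) (i, p) = ∑ jq : Fin N × Fin n, Acal (i, p) jq * x jq := rfl
    show (Acal *ᵥ x) (i, p) = _
    rw [h1, Fintype.sum_prod_type, mulVec_sum', Finset.sum_apply]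
    refine Finset.sum_congr rfl fun j _ => ?_
    rw [mulVec_smul, mulVec_mulVec, Pi.smul_apply, smul_eq_mul]
    have h3 : ((A * Pbar i * (P j)⁻¹) *ᵥ fun q => x (j, q)) p
        = ∑ q, (A * Pbar i * (P j)⁻¹) p q * x (j, q) := rfl
    rw [h3, Finset.mul_sum]
    refine Finset.sum_congr rfl fun q _ => ?_
    rw [hAcal (i, p) (j, q)]
    ring
  -- strict Lyapunov decrease
  have hLyapStrict : ∀ x : Fin N × Fin n → ℝ, x ≠ 0 →
      (Acal *ᵥ x) ⬝ᵥ D *ᵥ (Acal *ᵥ x) < x ⬝ᵥ D *ᵥ x := by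
    intro x hx
    have hchain : ∀ i,
        (fun p => (Acal *ᵥ x) (i, p)) ⬝ᵥ (P i)⁻¹ *ᵥ (fun p => (Acal *ᵥ x) (i, p))
          + ((P i)⁻¹ *ᵥ (fun p => (Acal *ᵥ x) (i, p)))
              ⬝ᵥ Q *ᵥ ((P i)⁻¹ *ᵥ (fun p => (Acal *ᵥ x) (i, p)))
        ≤ ∑ j, L i j * ((fun p => x (j, p)) ⬝ᵥ (P j)⁻¹ *ᵥ (fun p => x (j, p))) := by
      intro i
      exact chain_ineq (L i) (hLnonneg i) (fun j => (P j)⁻¹) hPinv (P i) (hPpos i)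
        (∑ j, L i j • ((C j)ᵀ * (R j)⁻¹ * C j)) (hTipsd i) (hSipd i)
        (Pbar i) A Q (hPbar' i) (hsol' i) (fun j p => x (j, p))
        (∑ j, L i j • ((P j)⁻¹ *ᵥ (fun p => x (j, p))))
        (fun p => (Acal *ᵥ x) (i, p))
        ((P i)⁻¹ *ᵥ (fun p => (Acal *ᵥ x) (i, p)))
        rfl (hfeq x i) rfl
    have hLHS := quadD (Acal *ᵥ x)
    have hRHS := quadD x
    have hsum : ∑ i, π i * ((fun p => (Acal *ᵥ x) (i, p))
            ⬝ᵥ (P i)⁻¹ *ᵥ (fun p => (Acal *ᵥ x) (i, p)))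
        + ∑ i, π i * (((P i)⁻¹ *ᵥ (fun p => (Acal *ᵥ x) (i, p)))
            ⬝ᵥ Q *ᵥ ((P i)⁻¹ *ᵥ (fun p => (Acal *ᵥ x) (i, p))))
        ≤ ∑ i, π i * ((fun p => x (i, p)) ⬝ᵥ (P i)⁻¹ *ᵥ (fun p => x (i, p))) := by
      have h2 : ∑ i, (π i * ((fun p => (Acal *ᵥ x) (i, p))
              ⬝ᵥ (P i)⁻¹ *ᵥ (fun p => (Acal *ᵥ x) (i, p)))
            + π i * (((P i)⁻¹ *ᵥ (fun p => (Acal *ᵥ x) (i, p)))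
              ⬝ᵥ Q *ᵥ ((P i)⁻¹ *ᵥ (fun p => (Acal *ᵥ x) (i, p)))))
          ≤ ∑ i, π i * ∑ j, L i j
              * ((fun p => x (j, p)) ⬝ᵥ (P j)⁻¹ *ᵥ (fun p => x (j, p))) := by
        refine Finset.sum_le_sum fun i _ => ?_
        rw [← mul_add]
        exact mul_le_mul_of_nonneg_left (hchain i) (hπpos i).le
      rw [Finset.sum_add_distrib] at h2
      have h3 : ∑ i, π i * ∑ j, L i j
            * ((fun p => x (j, p)) ⬝ᵥ (P j)⁻¹ *ᵥ (fun p => x (j, p)))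
          = ∑ j, π j * ((fun p => x (j, p)) ⬝ᵥ (P j)⁻¹ *ᵥ (fun p => x (j, p))) := by
        calc ∑ i, π i * ∑ j, L i j
              * ((fun p => x (j, p)) ⬝ᵥ (P j)⁻¹ *ᵥ (fun p => x (j, p)))
            = ∑ i, ∑ j, π i * L i j
              * ((fun p => x (j, p)) ⬝ᵥ (P j)⁻¹ *ᵥ (fun p => x (j, p))) := by
              refine Finset.sum_congr rfl fun i _ => ?_
              rw [Finset.mul_sum]
              exact Finset.sum_congr rfl fun j _ => by ring
          _ = ∑ j, ∑ i, π i * L i j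
              * ((fun p => x (j, p)) ⬝ᵥ (P j)⁻¹ *ᵥ (fun p => x (j, p))) :=
              Finset.sum_comm
          _ = ∑ j, π j * ((fun p => x (j, p)) ⬝ᵥ (P j)⁻¹ *ᵥ (fun p => x (j, p))) := by
              refine Finset.sum_congr rfl fun j _ => ?_
              rw [← Finset.sum_mul, hπeig j]
      rw [h3] at h2
      exact h2
    rw [hLHS, hRHS]
    by_cases hall : ∀ i, (fun p => (Acal *ᵥ x) (i, p)) = (0 : Fin n → ℝ)
    · have hz : ∑ i, π i * ((fun p => (Acal *ᵥ x) (i, p))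
            ⬝ᵥ (P i)⁻¹ *ᵥ (fun p => (Acal *ᵥ x) (i, p))) = 0 :=
        Finset.sum_eq_zero fun i _ => by rw [hall i, zero_dotProduct, mul_zero]
      rw [hz]
      have hpx := hDpos x hx
      rwa [hRHS] at hpx
    · push_neg at hall
      obtain ⟨i0, hi0⟩ := hall
      have hy0 : (P i0)⁻¹ *ᵥ (fun p => (Acal *ᵥ x) (i0, p)) ≠ 0 := by
        intro h0
        have h1 := quad_pos (hPinv i0) hi0
        rw [h0, dotProduct_zero] at h1
        exact lt_irrefl 0 h1
      have hq0 : 0 < π i0 * (((P i0)⁻¹ *ᵥ (fun p => (Acal *ᵥ x) (i0, p)))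
          ⬝ᵥ Q *ᵥ ((P i0)⁻¹ *ᵥ (fun p => (Acal *ᵥ x) (i0, p)))) :=
        mul_pos (hπpos i0) (quad_pos hQ hy0)
      have hge : π i0 * (((P i0)⁻¹ *ᵥ (fun p => (Acal *ᵥ x) (i0, p)))
            ⬝ᵥ Q *ᵥ ((P i0)⁻¹ *ᵥ (fun p => (Acal *ᵥ x) (i0, p))))
          ≤ ∑ i, π i * (((P i)⁻¹ *ᵥ (fun p => (Acal *ᵥ x) (i, p)))
            ⬝ᵥ Q *ᵥ ((P i)⁻¹ *ᵥ (fun p => (Acal *ᵥ x) (i, p)))) :=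
        Finset.single_le_sum
          (f := fun i => π i * (((P i)⁻¹ *ᵥ (fun p => (Acal *ᵥ x) (i, p)))
            ⬝ᵥ Q *ᵥ ((P i)⁻¹ *ᵥ (fun p => (Acal *ᵥ x) (i, p)))))
          (fun i _ => mul_nonneg (hπpos i).le
            (quad_nonneg hQ.posSemidef _)) (Finset.mem_univ i0)
      linarith
  exact schur_of_lyap Acal D hDpos hLyapStrict
end
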